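/- Let (K_{i(e)}, w_e, p_e)_{e∈E} be a contractive Markov system with average contracting rate 0 < a < 1 satisfying the standing assumptions, with invariant Borel probability measure μ, generalized Markov measure M and coding map F. Suppose C := ∑_{i=1}^N ∫_{K_i} d(x, x_i) dμ(x) < ∞ for some points x_i ∈ K_i. Let F be the sub-σ-algebra of B(Σ) generated by the coordinate maps σ ↦ σ_j for j ≤ 0. Then for every finite word (e_1,…,e_n) ∈ E^n, the conditional expectation with respect to M of the indicator of the cylinder {τ ∈ Σ : τ_1 = e_1, …, τ_n = e_n} given F satisfies, for M-a.e. σ ∈ Σ: E_M(1_{[e_1,…,e_n]} | F)(σ) = p_{e_1}(F(σ)) · p_{e_2}(w_{e_1}F(σ)) ⋯ p_{e_n}(w_{e_{n−1}} ∘ ⋯ ∘ w_{e_1} F(σ)). -/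

import Mathlib

open MeasureTheory Filter ENNReal

/-- The modulus of uniform continuity of a real-valued function on a
(pseudo)metric space, valued in `ℝ≥0∞`. -/
noncomputable def modulus {X : Type*} [PseudoMetricSpace X] (h : X → ℝ) (t : ℝ) : ℝ≥0∞ :=
  ⨆ (x : X) (y : X) (_ : dist x y ≤ t), ENNReal.ofReal |h x - h y|

/-- A function is Dini-continuous if `∫_0^c φ(t)/t dt < ∞` for some `c > 0`,
where `φ` is its modulus of uniform continuity. -/
def DiniContinuous {X : Type*} [PseudoMetricSpace X] (h : X → ℝ) : Prop :=
  ∃ c > (0 : ℝ), ∫⁻ t in Set.Ioc (0 : ℝ) c, modulus h t / ENNReal.ofReal t < ⊤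

/-- A Markov system on a metric space `K`, with vertex set `Fin N` and edge set `E`. -/
structure MarkovSystem (K : Type*) [MetricSpace K] [MeasurableSpace K]
    (N : ℕ) (E : Type*) [Fintype E] where
  /-- initial vertex of an edge -/
  edgeI : E → Fin N
  /-- terminal vertex of an edge -/
  edgeT : E → Fin N
  /-- the partition `K_1, …, K_N` of `K` -/
  Ki : Fin N → Set K
  Ki_nonempty : ∀ v, (Ki v).Nonempty
  Ki_measurable : ∀ v, MeasurableSet (Ki v)
  Ki_disjoint : ∀ v v', v ≠ v' → Disjoint (Ki v) (Ki v')
  Ki_cover : ∀ x : K, ∃ v, x ∈ Ki v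
  /-- the maps `w_e` -/
  w : E → K → K
  w_measurable : ∀ e, Measurable (w e)
  w_mapsTo : ∀ e, Set.MapsTo (w e) (Ki (edgeI e)) (Ki (edgeT e))
  /-- the probability functions `p_e` -/
  p : E → K → ℝ
  p_measurable : ∀ e, Measurable (p e)
  p_nonneg : ∀ e x, 0 ≤ p e x
  p_sum_one : ∀ x : K, ∑ e, p e x = 1
  p_eq_zero : ∀ e, ∀ x : K, x ∉ Ki (edgeI e) → p e x = 0

namespace MarkovSystem

variable {K : Type*} [MetricSpace K] [MeasurableSpace K] {N : ℕ} {E : Type*} [Fintype E]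

/-- Condition of contractiveness on average with rate `a`. -/
def ContractiveOnAvg (sys : MarkovSystem K N E) (a : ℝ) : Prop :=
  ∀ v : Fin N, ∀ x ∈ sys.Ki v, ∀ y ∈ sys.Ki v,
    ∑ e, sys.p e x * dist (sys.w e x) (sys.w e y) ≤ a * dist x y

/-- `μ` is an invariant Borel probability measure of the Markov system:
`∫ Uf dμ = ∫ f dμ` for every bounded Borel measurable `f`. -/
def IsInvariant (sys : MarkovSystem K N E) (μ : Measure K) : Prop :=
  IsProbabilityMeasure μ ∧
  ∀ f : K → ℝ, Measurable f → (∃ B, ∀ x, |f x| ≤ B) →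
    ∫ x, (∑ e, sys.p e x * f (sys.w e x)) ∂μ = ∫ x, f x ∂μ

end MarkovSystem

/-- `wordProb w p (e₁ :: … :: eₖ) x = p_{e₁}(x) p_{e₂}(w_{e₁}x) ⋯ p_{eₖ}(w_{e_{k-1}} ∘ ⋯ ∘ w_{e₁}x)`. -/
def wordProb {K E : Type*} (w : E → K → K) (p : E → K → ℝ) : List E → K → ℝ
  | [], _ => 1
  | e :: l, x => p e x * wordProb w p l (w e x)

/-- `wordMap w (e₁ :: … :: eₖ) = w_{eₖ} ∘ ⋯ ∘ w_{e₁}`. -/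
def wordMap {K E : Type*} (w : E → K → K) : List E → K → K
  | [], x => x
  | e :: l, x => wordMap w l (w e x)

/-- `M` is the generalized Markov measure on `Σ = E^ℤ` associated with the Markov
system and the invariant measure `μ`. -/
def IsMarkovMeasure {K : Type*} [MetricSpace K] [MeasurableSpace K] {N : ℕ}
    {E : Type*} [Fintype E] [MeasurableSpace E]
    (sys : MarkovSystem K N E) (μ : Measure K) (M : Measure (ℤ → E)) : Prop :=
  IsProbabilityMeasure M ∧
  ∀ (m : ℤ) (es : List E),
    M {σ : ℤ → E | ∀ j : Fin es.length, σ (m + (j : ℕ)) = es.get j}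
      = ENNReal.ofReal (∫ x, wordProb sys.w sys.p es x ∂μ)

/-- The left shift on `E^ℤ`. -/
def shift {E : Type*} (σ : ℤ → E) : ℤ → E := fun k => σ (k + 1)

/-- `comps w σ m = w_{σ₀} ∘ w_{σ₋₁} ∘ ⋯ ∘ w_{σ₋ₘ}`. -/
def comps {K E : Type*} (w : E → K → K) (σ : ℤ → E) : ℕ → K → K
  | 0 => w (σ 0)
  | n + 1 => fun x => comps w σ n (w (σ (-((n : ℤ) + 1))) x)

/-- `F` is the coding map of the contractive Markov system:
`F(σ) = lim_{m → -∞} w_{σ₀} ∘ ⋯ ∘ w_{σₘ} x_{i(σₘ)}` for `M`-a.e. `σ`. -/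
def IsCodingMap {K : Type*} [MetricSpace K] [MeasurableSpace K] {N : ℕ}
    {E : Type*} [Fintype E] [MeasurableSpace E]
    (sys : MarkovSystem K N E) (M : Measure (ℤ → E)) (F : (ℤ → E) → K) : Prop :=
  Measurable F ∧ ∃ xs : Fin N → K, (∀ v, xs v ∈ sys.Ki v) ∧
    ∀ᵐ σ ∂M, Filter.Tendsto
      (fun m : ℕ => comps sys.w σ m (xs (sys.edgeI (σ (-(m : ℤ))))))
      Filter.atTop (nhds (F σ))

/-- Entropy of the finite measurable partition given by the fibers of `π`. -/
noncomputable def partEntropy {Ω : Type*} [MeasurableSpace Ω] (M : Measure Ω)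
    {F : Type*} [Fintype F] (π : Ω → F) : ℝ :=
  -∑ f : F, ((M (π ⁻¹' {f})).toReal * Real.log (M (π ⁻¹' {f})).toReal)

/-- The Kolmogorov–Sinai entropy of a measure-preserving transformation `S`
with respect to `M`: the supremum over all finite measurable partitions `π` of
`inf_n (1/n) H(⋁_{i=0}^{n-1} S^{-i} π)`. -/
noncomputable def ksEntropy {Ω : Type*} [MeasurableSpace Ω] (M : Measure Ω) (S : Ω → Ω) : ℝ≥0∞ :=
  ⨆ (k : ℕ) (π : Ω → Fin k) (_ : ∀ j, MeasurableSet (π ⁻¹' {j})),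
    ⨅ n : ℕ, ENNReal.ofReal (((n : ℝ) + 1)⁻¹ *
      partEntropy M (fun ω => fun j : Fin (n + 1) => π (S^[(j : ℕ)] ω)))

/-- The sub-σ-algebra of `E^ℤ` generated by the coordinates `σ_j`, `j ≤ 0`. -/
def pastAlgebra (E : Type*) [MeasurableSpace E] : MeasurableSpace (ℤ → E) :=
  ⨆ (j : ℤ) (_ : j ≤ 0), MeasurableSpace.comap (fun σ : ℤ → E => σ j) inferInstance

-- chunk 1
lemma wordMap_nil {K E : Type*} (w : E → K → K) (x : K) : wordMap w [] x = x := rfl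
lemma wordMap_cons {K E : Type*} (w : E → K → K) (e : E) (l : List E) (x : K) :
    wordMap w (e :: l) x = wordMap w l (w e x) := rfl
lemma wordProb_nil {K E : Type*} (w : E → K → K) (p : E → K → ℝ) (x : K) :
    wordProb w p [] x = 1 := rfl
lemma wordProb_cons {K E : Type*} (w : E → K → K) (p : E → K → ℝ) (e : E) (l : List E) (x : K) :
    wordProb w p (e :: l) x = p e x * wordProb w p l (w e x) := rfl

lemma wordMap_append' {K E : Type*} (w : E → K → K) :
    ∀ (l1 l2 : List E) (x : K), wordMap w (l1 ++ l2) x = wordMap w l2 (wordMap w l1 x)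
  | [], l2, x => rfl
  | e :: l1, l2, x => wordMap_append' w l1 l2 (w e x)

lemma wordProb_append' {K E : Type*} (w : E → K → K) (p : E → K → ℝ) :
    ∀ (l1 l2 : List E) (x : K),
      wordProb w p (l1 ++ l2) x = wordProb w p l1 x * wordProb w p l2 (wordMap w l1 x)
  | [], l2, x => (one_mul _).symm
  | e :: l1, l2, x => by
    rw [List.cons_append, wordProb_cons, wordProb_append' w p l1 l2 (w e x),
      wordProb_cons, wordMap_cons, mul_assoc]

namespace MarkovSystem

variable {K : Type*} [MetricSpace K] [MeasurableSpace K]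
  {N : ℕ} {E : Type*} [Fintype E]

variable (sys : MarkovSystem K N E)

lemma p_le_one (e : E) (x : K) : sys.p e x ≤ 1 := by
  have h := sys.p_sum_one x
  have h2 : sys.p e x ≤ ∑ e', sys.p e' x :=
    Finset.single_le_sum (fun i _ => sys.p_nonneg i x) (Finset.mem_univ e)
  linarith

lemma wordProb_nonneg (l : List E) : ∀ x : K, 0 ≤ wordProb sys.w sys.p l x := by
  induction l with
  | nil => intro x; exact zero_le_one
  | cons e l ih => intro x; exact mul_nonneg (sys.p_nonneg e x) (ih _)

lemma wordProb_le_one (l : List E) : ∀ x : K, wordProb sys.w sys.p l x ≤ 1 := by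
  induction l with
  | nil => intro x; exact le_refl 1
  | cons e l ih =>
    intro x
    have := mul_le_mul (sys.p_le_one e x) (ih (sys.w e x))
      (sys.wordProb_nonneg l (sys.w e x)) zero_le_one
    simpa [wordProb_cons] using this

lemma measurable_wordMap (l : List E) : Measurable (wordMap sys.w l) := by
  induction l with
  | nil => exact measurable_id
  | cons e l ih => exact ih.comp (sys.w_measurable e)

lemma measurable_wordProb (l : List E) : Measurable (wordProb sys.w sys.p l) := by
  induction l with
  | nil => exact measurable_const
  | cons e l ih => exact (sys.p_measurable e).mul (ih.comp (sys.w_measurable e))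

noncomputable def cls (x : K) : Fin N := (sys.Ki_cover x).choose

lemma mem_cls (x : K) : x ∈ sys.Ki (sys.cls x) := (sys.Ki_cover x).choose_spec

lemma cls_eq {x : K} {v : Fin N} (hx : x ∈ sys.Ki v) : sys.cls x = v := by
  by_contra h
  exact Set.disjoint_left.mp (sys.Ki_disjoint _ _ h) (sys.mem_cls x) hx

lemma mem_of_p_ne_zero {e : E} {x : K} (h : sys.p e x ≠ 0) : x ∈ sys.Ki (sys.edgeI e) := by
  by_contra hx; exact h (sys.p_eq_zero e x hx)

lemma sum_wordProb_ofFn : ∀ (n : ℕ) (x : K),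
    ∑ u : Fin n → E, wordProb sys.w sys.p (List.ofFn u) x = 1
  | 0, x => by
    haveI : Unique (Fin 0 → E) := ⟨⟨fun j => j.elim0⟩, fun u => funext fun j => j.elim0⟩
    rw [Fintype.sum_unique]
    rfl
  | n + 1, x => by
    rw [← (Fin.consEquiv (fun _ : Fin (n + 1) => E)).sum_comp]
    rw [Fintype.sum_prod_type]
    have : ∀ (e : E) (v : Fin n → E),
        wordProb sys.w sys.p (List.ofFn (Fin.consEquiv (fun _ => E) (e, v))) x
          = sys.p e x * wordProb sys.w sys.p (List.ofFn v) (sys.w e x) := by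
      intro e v
      show wordProb sys.w sys.p (List.ofFn (Fin.cons e v)) x = _
      rw [List.ofFn_cons, wordProb_cons]
    simp_rw [this, ← Finset.mul_sum, sum_wordProb_ofFn n, mul_one, sys.p_sum_one]

end MarkovSystem
-- chunk 2 (appended to c1 context for testing)
section Chunk2

lemma lintegral_inv_Ioc_top {c : ℝ} (hc : 0 < c) :
    ∫⁻ t in Set.Ioc (0:ℝ) c, (ENNReal.ofReal t)⁻¹ = ⊤ := by
  by_contra h
  have hint : MeasureTheory.IntegrableOn (fun t : ℝ => t⁻¹) (Set.Ioc 0 c) := by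
    refine ⟨measurable_inv.aestronglyMeasurable, ?_⟩
    rw [MeasureTheory.hasFiniteIntegral_iff_norm]
    have heq : ∫⁻ t in Set.Ioc (0:ℝ) c, ENNReal.ofReal ‖t⁻¹‖
        = ∫⁻ t in Set.Ioc (0:ℝ) c, (ENNReal.ofReal t)⁻¹ := by
      refine MeasureTheory.setLIntegral_congr_fun measurableSet_Ioc
        (fun t ht => ?_)
      rw [Real.norm_eq_abs, abs_of_nonneg (inv_nonneg.mpr ht.1.le),
        ENNReal.ofReal_inv_of_pos ht.1]
    rw [heq]
    exact lt_top_iff_ne_top.mpr h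
  have hii : IntervalIntegrable (fun t : ℝ => t⁻¹) MeasureTheory.volume 0 c :=
    (intervalIntegrable_iff_integrableOn_Ioc_of_le hc.le).mpr hint
  rcases intervalIntegrable_inv_iff.mp hii with h0 | h0
  · exact hc.ne h0
  · exact h0 (Set.left_mem_uIcc)

namespace MarkovSystem

variable {K : Type*} [MetricSpace K] [MeasurableSpace K]
  {N : ℕ} {E : Type*} [Fintype E]

variable (sys : MarkovSystem K N E) {a δ : ℝ}

lemma dist_w_le (hcontr : sys.ContractiveOnAvg a)
    (hδ : ∀ e, ∀ x ∈ sys.Ki (sys.edgeI e), δ ≤ sys.p e x)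
    (e : E) {x y : K} (hx : x ∈ sys.Ki (sys.edgeI e)) (hy : y ∈ sys.Ki (sys.edgeI e)) :
    δ * dist (sys.w e x) (sys.w e y) ≤ a * dist x y := by
  have h1 : sys.p e x * dist (sys.w e x) (sys.w e y)
      ≤ ∑ e', sys.p e' x * dist (sys.w e' x) (sys.w e' y) :=
    Finset.single_le_sum (f := fun e' => sys.p e' x * dist (sys.w e' x) (sys.w e' y))
      (fun i _ => mul_nonneg (sys.p_nonneg i x) dist_nonneg) (Finset.mem_univ e)
  have h2 := hcontr (sys.edgeI e) x hx y hy
  have h3 : δ * dist (sys.w e x) (sys.w e y) ≤ sys.p e x * dist (sys.w e x) (sys.w e y) :=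
    mul_le_mul_of_nonneg_right (hδ e x hx) dist_nonneg
  linarith

lemma p_ucont (e : E)
    (hdini : DiniContinuous fun x : sys.Ki (sys.edgeI e) => sys.p e (x : K))
    {ε : ℝ} (hε : 0 < ε) :
    ∃ t > (0:ℝ), ∀ x y : K, x ∈ sys.Ki (sys.edgeI e) → y ∈ sys.Ki (sys.edgeI e) →
      dist x y ≤ t → |sys.p e x - sys.p e y| ≤ ε := by
  obtain ⟨c, hc, hfin⟩ := hdini
  set h : sys.Ki (sys.edgeI e) → ℝ := fun x => sys.p e (x : K) with hh
  by_contra hcon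
  push_neg at hcon
  have key : ∀ t ∈ Set.Ioc (0:ℝ) c, ENNReal.ofReal ε ≤ modulus h t := by
    intro t ht
    obtain ⟨x, y, hx, hy, hd, hgt⟩ := hcon t ht.1
    refine le_trans (ENNReal.ofReal_le_ofReal hgt.le) ?_
    refine le_iSup_of_le (⟨x, hx⟩ : sys.Ki (sys.edgeI e)) ?_
    refine le_iSup_of_le (⟨y, hy⟩ : sys.Ki (sys.edgeI e)) ?_
    have hd' : dist (⟨x, hx⟩ : sys.Ki (sys.edgeI e)) (⟨y, hy⟩ : sys.Ki (sys.edgeI e)) ≤ t := by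
      rwa [Subtype.dist_eq]
    exact le_iSup_of_le hd' (le_refl _)
  have hge : ∫⁻ t in Set.Ioc (0:ℝ) c, ENNReal.ofReal ε / ENNReal.ofReal t
      ≤ ∫⁻ t in Set.Ioc (0:ℝ) c, modulus h t / ENNReal.ofReal t := by
    refine MeasureTheory.setLIntegral_mono' measurableSet_Ioc fun t ht => ?_
    exact ENNReal.div_le_div_right (key t ht) _
  have heq : ∫⁻ t in Set.Ioc (0:ℝ) c, ENNReal.ofReal ε / ENNReal.ofReal t = ⊤ := by
    simp_rw [div_eq_mul_inv]
    rw [MeasureTheory.lintegral_const_mul' _ _ ENNReal.ofReal_ne_top]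
    rw [lintegral_inv_Ioc_top hc]
    rw [ENNReal.mul_top (by simpa using hε)]
  rw [heq] at hge
  exact (lt_irrefl ⊤) (lt_of_le_of_lt hge hfin)

lemma mem_Ki_unique {x : K} {v v' : Fin N} (h : x ∈ sys.Ki v) (h' : x ∈ sys.Ki v') : v = v' := by
  by_contra hne
  exact Set.disjoint_left.mp (sys.Ki_disjoint v v' hne) h h'

lemma fiberUC (ha0 : 0 < a) (hδpos : 0 < δ) (hcontr : sys.ContractiveOnAvg a)
    (hδ : ∀ e, ∀ x ∈ sys.Ki (sys.edgeI e), δ ≤ sys.p e x)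
    (hdini : ∀ e, DiniContinuous fun x : sys.Ki (sys.edgeI e) => sys.p e (x : K)) :
    ∀ (es : List E) {ε : ℝ}, 0 < ε → ∃ t > (0:ℝ), ∀ (v : Fin N) (x y : K),
      x ∈ sys.Ki v → y ∈ sys.Ki v → dist x y ≤ t →
      |wordProb sys.w sys.p es x - wordProb sys.w sys.p es y| ≤ ε := by
  intro es
  induction es with
  | nil =>
    intro ε hε
    exact ⟨1, one_pos, fun v x y _ _ _ => by
      rw [wordProb_nil, wordProb_nil, sub_self, abs_zero]; exact hε.le⟩
  | cons e l ih =>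
    intro ε hε
    obtain ⟨t₁, ht₁, H₁⟩ := ih (half_pos hε)
    obtain ⟨t₂, ht₂, H₂⟩ := sys.p_ucont e (hdini e) (half_pos hε)
    refine ⟨min t₂ (t₁ * δ / a), lt_min ht₂ (by positivity), fun v x y hx hy hd => ?_⟩
    by_cases hv : v = sys.edgeI e
    · subst hv
      set A := wordProb sys.w sys.p l (sys.w e x)
      set B := wordProb sys.w sys.p l (sys.w e y)
      have hwx := sys.w_mapsTo e hx
      have hwy := sys.w_mapsTo e hy
      have hdw : dist (sys.w e x) (sys.w e y) ≤ t₁ := by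
        have h1 := sys.dist_w_le hcontr hδ e hx hy
        have h2 : a * dist x y ≤ a * (t₁ * δ / a) :=
          mul_le_mul_of_nonneg_left (le_trans hd (min_le_right _ _)) ha0.le
        have he : a * (t₁ * δ / a) = δ * t₁ := by field_simp
        have h4 : δ * dist (sys.w e x) (sys.w e y) ≤ δ * t₁ := by linarith
        exact le_of_mul_le_mul_left h4 hδpos
      have hAB : |A - B| ≤ ε / 2 := H₁ _ _ _ hwx hwy hdw
      have hpp : |sys.p e x - sys.p e y| ≤ ε / 2 :=
        H₂ x y hx hy (le_trans hd (min_le_left _ _))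
      have hA1 : |A| ≤ 1 := abs_le.mpr ⟨by linarith [sys.wordProb_nonneg l (sys.w e x)],
        sys.wordProb_le_one l (sys.w e x)⟩
      have hp1 : |sys.p e y| ≤ 1 := abs_le.mpr ⟨by linarith [sys.p_nonneg e y], sys.p_le_one e y⟩
      rw [wordProb_cons, wordProb_cons]
      have : sys.p e x * A - sys.p e y * B = (sys.p e x - sys.p e y) * A + sys.p e y * (A - B) := by
        ring
      rw [this]
      calc |(sys.p e x - sys.p e y) * A + sys.p e y * (A - B)|
          ≤ |(sys.p e x - sys.p e y) * A| + |sys.p e y * (A - B)| := abs_add_le _ _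
        _ ≤ ε / 2 * 1 + 1 * (ε / 2) := by
            rw [abs_mul, abs_mul]
            exact add_le_add (mul_le_mul hpp hA1 (abs_nonneg _) (by linarith))
              (mul_le_mul hp1 hAB (abs_nonneg _) zero_le_one)
        _ = ε := by ring
    · have hpx : sys.p e x = 0 := sys.p_eq_zero e x fun hmem => hv (sys.mem_Ki_unique hx hmem)
      have hpy : sys.p e y = 0 := sys.p_eq_zero e y fun hmem => hv (sys.mem_Ki_unique hy hmem)
      rw [wordProb_cons, wordProb_cons, hpx, hpy]
      simpa using hε.le

lemma sameClass : ∀ (l : List E) {v : Fin N} {x y : K}, x ∈ sys.Ki v → y ∈ sys.Ki v →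
    wordProb sys.w sys.p l x ≠ 0 →
    ∃ v', wordMap sys.w l x ∈ sys.Ki v' ∧ wordMap sys.w l y ∈ sys.Ki v' := by
  intro l
  induction l with
  | nil => intro v x y hx hy _; exact ⟨v, hx, hy⟩
  | cons e l ih =>
    intro v x y hx hy hne
    rw [wordProb_cons] at hne
    have hp : sys.p e x ≠ 0 := fun h => hne (by rw [h, zero_mul])
    have hxe : x ∈ sys.Ki (sys.edgeI e) := sys.mem_of_p_ne_zero hp
    have hv : v = sys.edgeI e := sys.mem_Ki_unique hx hxe
    subst hv
    exact ih (sys.w_mapsTo e hx) (sys.w_mapsTo e hy) fun h => hne (by rw [h, mul_zero])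

lemma contract_sum (ha0 : 0 < a) (hcontr : sys.ContractiveOnAvg a) :
    ∀ (n : ℕ) {v : Fin N} (x y : K), x ∈ sys.Ki v → y ∈ sys.Ki v →
      ∑ u : Fin n → E, wordProb sys.w sys.p (List.ofFn u) x *
        dist (wordMap sys.w (List.ofFn u) x) (wordMap sys.w (List.ofFn u) y)
      ≤ a ^ n * dist x y := by
  intro n
  induction n with
  | zero =>
    intro v x y hx hy
    haveI : Unique (Fin 0 → E) := ⟨⟨fun j => j.elim0⟩, fun u => funext fun j => j.elim0⟩
    rw [Fintype.sum_unique]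
    show wordProb sys.w sys.p [] x * dist (wordMap sys.w [] x) (wordMap sys.w [] y) ≤ _
    rw [wordProb_nil, wordMap_nil, wordMap_nil, pow_zero]
  | succ n ih =>
    intro v x y hx hy
    rw [← (Fin.consEquiv (fun _ : Fin (n + 1) => E)).sum_comp, Fintype.sum_prod_type]
    have step : ∀ e : E, ∑ u' : Fin n → E,
        wordProb sys.w sys.p (List.ofFn (Fin.cons e u')) x *
          dist (wordMap sys.w (List.ofFn (Fin.cons e u')) x)
               (wordMap sys.w (List.ofFn (Fin.cons e u')) y)
        ≤ sys.p e x * (a ^ n * dist (sys.w e x) (sys.w e y)) := by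
      intro e
      simp_rw [List.ofFn_cons, wordProb_cons, wordMap_cons, mul_assoc, ← Finset.mul_sum]
      by_cases hp : sys.p e x = 0
      · rw [hp, zero_mul, zero_mul]
      · have hxe : x ∈ sys.Ki (sys.edgeI e) := sys.mem_of_p_ne_zero hp
        have hv : v = sys.edgeI e := sys.mem_Ki_unique hx hxe
        subst hv
        exact mul_le_mul_of_nonneg_left
          (ih (sys.w e x) (sys.w e y) (sys.w_mapsTo e hx) (sys.w_mapsTo e hy))
          (sys.p_nonneg e x)
    refine le_trans (Finset.sum_le_sum fun e (_ : e ∈ Finset.univ) => step e) ?_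
    calc ∑ e : E, sys.p e x * (a ^ n * dist (sys.w e x) (sys.w e y))
        = a ^ n * ∑ e : E, sys.p e x * dist (sys.w e x) (sys.w e y) := by
          rw [Finset.mul_sum]; exact Finset.sum_congr rfl fun e _ => by ring
      _ ≤ a ^ n * (a * dist x y) :=
          mul_le_mul_of_nonneg_left (hcontr v x hx y hy) (pow_nonneg ha0.le n)
      _ = a ^ (n + 1) * dist x y := by ring

end MarkovSystem
end Chunk2
-- chunk 3: cylinders
section Chunk3

variable {E : Type*}

/-- list cylinder -/
def lCyl (m : ℤ) (l : List E) : Set (ℤ → E) :=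
  {σ : ℤ → E | ∀ j : Fin l.length, σ (m + (j : ℕ)) = l.get j}

lemma mem_lCyl {m : ℤ} {l : List E} {σ : ℤ → E} :
    σ ∈ lCyl m l ↔ ∀ j : Fin l.length, σ (m + (j : ℕ)) = l.get j := Iff.rfl

variable [MeasurableSpace E] [MeasurableSingletonClass E]

lemma measurableSet_lCyl (m : ℤ) (l : List E) : MeasurableSet (lCyl m l) := by
  have h : lCyl m l = ⋂ j : Fin l.length, (fun σ : ℤ → E => σ (m + (j : ℕ))) ⁻¹' {l.get j} := by
    ext σ; simp [lCyl]
  rw [h]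
  exact MeasurableSet.iInter fun j => (measurable_pi_apply _) (measurableSet_singleton _)

lemma lCyl_append (m : ℤ) (l₁ l₂ : List E) :
    lCyl m (l₁ ++ l₂) = lCyl m l₁ ∩ lCyl (m + l₁.length) l₂ := by
  ext σ
  simp only [lCyl, Set.mem_setOf_eq, Set.mem_inter_iff, List.get_eq_getElem]
  constructor
  · intro h
    constructor
    · intro j
      have hj : (j : ℕ) < (l₁ ++ l₂).length := by
        rw [List.length_append]; omega
      have := h ⟨j, hj⟩
      simpa [List.getElem_append_left (by exact j.isLt : (j:ℕ) < l₁.length)] using this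
    · intro j
      have hj : l₁.length + (j : ℕ) < (l₁ ++ l₂).length := by
        rw [List.length_append]; omega
      have := h ⟨l₁.length + j, hj⟩
      have harith : (m : ℤ) + ((l₁.length + (j:ℕ) : ℕ) : ℤ) = m + l₁.length + (j : ℕ) := by
        push_cast; ring
      rw [harith] at this
      have hget : (l₁ ++ l₂)[l₁.length + (j:ℕ)] = l₂[(j:ℕ)] := by
        rw [List.getElem_append_right (by omega)]
        congr 1; omega
      rwa [hget] at this
  · rintro ⟨h₁, h₂⟩ j
    by_cases hj : (j : ℕ) < l₁.length
    · have := h₁ ⟨j, hj⟩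
      simpa [List.getElem_append_left hj] using this
    · push_neg at hj
      have hj2 : (j : ℕ) - l₁.length < l₂.length := by
        have hlt : (j : ℕ) < l₁.length + l₂.length := by
          simpa [List.length_append] using j.isLt
        omega
      have := h₂ ⟨(j : ℕ) - l₁.length, hj2⟩
      have harith : m + (l₁.length : ℤ) + (((j:ℕ) - l₁.length : ℕ) : ℤ) = m + (j : ℕ) := by
        push_cast [hj]; ring
      rw [harith] at this
      rw [List.getElem_append_right hj]
      exact this

lemma comps_eq {K : Type*} (w : E → K → K) (σ : ℤ → E) :
    ∀ (k : ℕ) (z : K),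
      comps w σ k z = wordMap w (List.ofFn fun j : Fin (k + 1) => σ (-(k : ℤ) + (j : ℕ))) z := by
  intro k
  induction k with
  | zero =>
    intro z
    show w (σ 0) z = _
    rw [List.ofFn_succ]
    simp [wordMap_cons, wordMap_nil]
  | succ k ih =>
    intro z
    show comps w σ k (w (σ (-((k : ℤ) + 1))) z) = _
    rw [ih]
    conv_rhs => rw [List.ofFn_succ, wordMap_cons]
    have h1 : (fun j : Fin (k+1) => σ (-(((k:ℕ)+1 : ℕ) : ℤ) + (((j.succ : Fin (k+2)) : ℕ) : ℤ)))
        = fun j : Fin (k+1) => σ (-(k : ℤ) + (j : ℕ)) := by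
      funext j
      congr 1
      rw [Fin.val_succ]
      push_cast; ring
    rw [h1]
    congr 3

end Chunk3
-- chunk 4: pastAlgebra
section Chunk4

variable {E : Type*} [MeasurableSpace E] [MeasurableSingletonClass E] [Fintype E]

lemma pastAlgebra_le :
    pastAlgebra E ≤ (MeasurableSpace.pi : MeasurableSpace (ℤ → E)) :=
  iSup_le fun j => iSup_le fun _ => (measurable_pi_apply j).comap_le

lemma measurable_eval_past {j : ℤ} (hj : j ≤ 0) :
    Measurable[pastAlgebra E] (fun σ : ℤ → E => σ j) := by
  rw [measurable_iff_comap_le]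
  exact le_iSup_of_le j (le_iSup_of_le hj le_rfl)

lemma measurableSet_lCyl_past {m : ℤ} {l : List E} (h : m + l.length ≤ 1) :
    MeasurableSet[pastAlgebra E] (lCyl m l) := by
  have heq : lCyl m l = ⋂ j : Fin l.length, (fun σ : ℤ → E => σ (m + (j : ℕ))) ⁻¹' {l.get j} := by
    ext σ; simp [lCyl]
  rw [heq]
  exact MeasurableSet.iInter fun j =>
    (measurable_eval_past (by have := j.isLt; omega)) (measurableSet_singleton _)

/-- basic cylinders on nonpositive coordinates ending at 0 -/
def pastCylinders (E : Type*) : Set (Set (ℤ → E)) :=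
  {s | ∃ l : List E, s = lCyl (1 - l.length) l}

lemma lCyl_subset_of_mem {l l' : List E} (hlen : l.length ≤ l'.length) (σ₀ : ℤ → E)
    (h₀ : σ₀ ∈ lCyl (1 - l.length) l) (h₀' : σ₀ ∈ lCyl (1 - l'.length) l') :
    lCyl (1 - (l'.length : ℤ)) l' ⊆ lCyl (1 - (l.length : ℤ)) l := by
  intro σ hσ
  intro j
  have hj' : l'.length - l.length + (j : ℕ) < l'.length := by have := j.isLt; omega
  have e1 := hσ ⟨_, hj'⟩
  have e2 := h₀' ⟨_, hj'⟩
  have e3 := h₀ j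
  have harith : (1 - (l'.length : ℤ)) + ((l'.length - l.length + (j : ℕ) : ℕ) : ℤ)
      = 1 - (l.length : ℤ) + (j : ℕ) := by
    push_cast [hlen]; ring
  rw [harith] at e1 e2
  rw [e1]
  rw [← e2, e3]

lemma isPiSystem_pastCylinders : IsPiSystem (pastCylinders E) := by
  rintro s ⟨l, rfl⟩ t ⟨l', rfl⟩ hne
  obtain ⟨σ₀, h1, h2⟩ := hne
  rcases le_total l.length l'.length with h | h
  · have hsub := lCyl_subset_of_mem h σ₀ h1 h2
    rw [Set.inter_eq_right.mpr hsub]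
    exact ⟨l', rfl⟩
  · have hsub := lCyl_subset_of_mem h σ₀ h2 h1
    rw [Set.inter_eq_left.mpr hsub]
    exact ⟨l, rfl⟩

lemma singleton_eval_mem_generateFrom {j : ℤ} (hj : j ≤ 0) (e : E) :
    MeasurableSet[MeasurableSpace.generateFrom (pastCylinders E)]
      ((fun σ : ℤ → E => σ j) ⁻¹' {e}) := by
  set n : ℕ := (1 - j).toNat with hn
  have hn1 : (n : ℤ) = 1 - j := Int.toNat_of_nonneg (by omega)
  have hn0 : 0 < n := by omega
  have hset : (fun σ : ℤ → E => σ j) ⁻¹' {e}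
      = ⋃ (u : Fin n → E) (_ : u ⟨0, hn0⟩ = e), lCyl (1 - (n : ℤ)) (List.ofFn u) := by
    ext σ
    simp only [Set.mem_preimage, Set.mem_singleton_iff, Set.mem_iUnion]
    constructor
    · intro hσ
      refine ⟨fun i => σ (j + (i : ℕ)), by simpa using hσ, fun i => ?_⟩
      rw [List.get_ofFn]
      simp only [Fin.coe_cast]
      congr 1
      omega
    · rintro ⟨u, hu, hmem⟩
      have hlen : 0 < (List.ofFn u).length := by rw [List.length_ofFn]; exact hn0
      have := hmem ⟨0, hlen⟩
      rw [List.get_ofFn] at this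
      have h0 : u (Fin.cast List.length_ofFn ⟨0, hlen⟩) = u ⟨0, hn0⟩ := by congr 1
      rw [h0] at this
      rw [← hu]
      rw [← this]
      congr 1
      have : ((⟨0, hlen⟩ : Fin (List.ofFn u).length) : ℕ) = 0 := rfl
      rw [this]
      omega
  rw [hset]
  refine MeasurableSet.iUnion fun u => MeasurableSet.iUnion fun _ => ?_
  refine MeasurableSpace.measurableSet_generateFrom ⟨List.ofFn u, ?_⟩
  rw [List.length_ofFn]

lemma pastAlgebra_eq_generateFrom :
    pastAlgebra E = MeasurableSpace.generateFrom (pastCylinders E) := by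
  apply le_antisymm
  · refine iSup_le fun j => iSup_le fun hj => ?_
    rw [← measurable_iff_comap_le]
    intro B _
    have hB : (fun σ : ℤ → E => σ j) ⁻¹' B = ⋃ e ∈ B, (fun σ : ℤ → E => σ j) ⁻¹' {e} := by
      ext σ; simp
    rw [hB]
    exact MeasurableSet.biUnion (Set.toFinite B).countable
      fun e _ => singleton_eval_mem_generateFrom hj e
  · refine MeasurableSpace.generateFrom_le ?_
    rintro s ⟨l, rfl⟩
    exact measurableSet_lCyl_past (by omega)

end Chunk4
-- chunk 5a
section Chunk5a

lemma integrable_of_bound {α : Type*} [MeasurableSpace α] (μ : MeasureTheory.Measure α)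
    [MeasureTheory.IsFiniteMeasure μ] (f : α → ℝ) (B : ℝ) (hm : Measurable f)
    (hb : ∀ x, |f x| ≤ B) : MeasureTheory.Integrable f μ :=
  (MeasureTheory.integrable_const B).mono' hm.aestronglyMeasurable
    (MeasureTheory.ae_of_all _ (by simpa [Real.norm_eq_abs] using hb))

lemma ofFn_get_cast {α : Type*} {m : ℕ} (l : List α) (h : m = l.length) :
    List.ofFn (fun i : Fin m => l.get (Fin.cast h i)) = l := by
  subst h
  simpa using List.ofFn_get l

namespace MarkovSystem

variable {K : Type*} [MetricSpace K] [MeasurableSpace K]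
  {N : ℕ} {E : Type*} [Fintype E]

variable (sys : MarkovSystem K N E)

lemma wordBounded (l : List E) (ψ : K → ℝ) (B : ℝ) (hψb : ∀ y, |ψ y| ≤ B) (x : K) :
    |wordProb sys.w sys.p l x * ψ (wordMap sys.w l x)| ≤ B := by
  rw [abs_mul]
  calc |wordProb sys.w sys.p l x| * |ψ (wordMap sys.w l x)|
      ≤ 1 * |ψ (wordMap sys.w l x)| := by
        apply mul_le_mul_of_nonneg_right _ (abs_nonneg _)
        rw [abs_of_nonneg (sys.wordProb_nonneg l x)]
        exact sys.wordProb_le_one l x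
    _ = |ψ (wordMap sys.w l x)| := one_mul _
    _ ≤ B := hψb _

lemma sum_integral_wordProb_append (μ : MeasureTheory.Measure K) (hμ : sys.IsInvariant μ)
    (fs : List E) (ψ : K → ℝ) (hψm : Measurable ψ) (B : ℝ) (hψb : ∀ y, |ψ y| ≤ B) :
    ∀ d : ℕ,
      ∑ u : Fin d → E, ∫ x, wordProb sys.w sys.p (List.ofFn u ++ fs) x *
          ψ (wordMap sys.w (List.ofFn u ++ fs) x) ∂μ
        = ∫ x, wordProb sys.w sys.p fs x * ψ (wordMap sys.w fs x) ∂μ := by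
  haveI : MeasureTheory.IsProbabilityMeasure μ := hμ.1
  intro d
  induction d with
  | zero =>
    haveI : Unique (Fin 0 → E) := ⟨⟨fun j => j.elim0⟩, fun u => funext fun j => j.elim0⟩
    rw [Fintype.sum_unique]
    have h : List.ofFn (default : Fin 0 → E) ++ fs = fs := by
      rw [List.ofFn_zero, List.nil_append]
    rw [h]
  | succ d ih =>
    rw [← (Fin.consEquiv (fun _ : Fin (d + 1) => E)).sum_comp, Fintype.sum_prod_type]
    have hterm : ∀ (e : E) (u' : Fin d → E),
        (∫ x, wordProb sys.w sys.p (List.ofFn (Fin.cons e u') ++ fs) x *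
          ψ (wordMap sys.w (List.ofFn (Fin.cons e u') ++ fs) x) ∂μ)
        = ∫ x, sys.p e x * (wordProb sys.w sys.p (List.ofFn u' ++ fs) (sys.w e x) *
            ψ (wordMap sys.w (List.ofFn u' ++ fs) (sys.w e x))) ∂μ := by
      intro e u'
      congr 1
      funext x
      rw [List.ofFn_cons, List.cons_append, wordProb_cons, wordMap_cons, mul_assoc]
    have hmeas : ∀ l : List E, Measurable fun y =>
        wordProb sys.w sys.p l y * ψ (wordMap sys.w l y) :=
      fun l => (sys.measurable_wordProb l).mul (hψm.comp (sys.measurable_wordMap l))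
    have hint : ∀ (e : E) (l : List E), MeasureTheory.Integrable
        (fun x => sys.p e x * (wordProb sys.w sys.p l (sys.w e x) *
          ψ (wordMap sys.w l (sys.w e x)))) μ := by
      intro e l
      refine integrable_of_bound μ _ B ?_ ?_
      · exact (sys.p_measurable e).mul ((hmeas l).comp (sys.w_measurable e))
      · intro x
        rw [abs_mul]
        calc |sys.p e x| * |wordProb sys.w sys.p l (sys.w e x) * ψ (wordMap sys.w l (sys.w e x))|
            ≤ 1 * B := by
              apply mul_le_mul _ (sys.wordBounded l ψ B hψb _) (abs_nonneg _) zero_le_one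
              rw [abs_of_nonneg (sys.p_nonneg e x)]; exact sys.p_le_one e x
          _ = B := one_mul B
    calc ∑ e : E, ∑ u' : Fin d → E, ∫ x,
          wordProb sys.w sys.p (List.ofFn ((Fin.consEquiv fun _ => E) (e, u')) ++ fs) x *
            ψ (wordMap sys.w (List.ofFn ((Fin.consEquiv fun _ => E) (e, u')) ++ fs) x) ∂μ
        = ∑ u' : Fin d → E, ∑ e : E, ∫ x, sys.p e x *
            (wordProb sys.w sys.p (List.ofFn u' ++ fs) (sys.w e x) *
              ψ (wordMap sys.w (List.ofFn u' ++ fs) (sys.w e x))) ∂μ := by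
          rw [Finset.sum_comm]
          exact Finset.sum_congr rfl fun u' _ => Finset.sum_congr rfl fun e _ => hterm e u'
      _ = ∑ u' : Fin d → E, ∫ x, ∑ e : E, sys.p e x *
            (wordProb sys.w sys.p (List.ofFn u' ++ fs) (sys.w e x) *
              ψ (wordMap sys.w (List.ofFn u' ++ fs) (sys.w e x))) ∂μ := by
          exact Finset.sum_congr rfl fun u' _ =>
            (MeasureTheory.integral_finset_sum _ fun e _ => hint e _).symm
      _ = ∑ u' : Fin d → E, ∫ x, wordProb sys.w sys.p (List.ofFn u' ++ fs) x *
            ψ (wordMap sys.w (List.ofFn u' ++ fs) x) ∂μ := by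
          refine Finset.sum_congr rfl fun u' _ => ?_
          exact hμ.2 _ (hmeas _) ⟨B, fun x => sys.wordBounded _ ψ B hψb x⟩
      _ = _ := ih

end MarkovSystem
end Chunk5a
-- chunk 5b
section Chunk5b

namespace MarkovSystem

variable {K : Type*} [MetricSpace K] [MeasurableSpace K] [BorelSpace K]
  {N : ℕ} {E : Type*} [Fintype E]

variable (sys : MarkovSystem K N E) {a : ℝ}

lemma measurable_Ddist (xs' : Fin N → K) :
    Measurable fun x : K => dist x (xs' (sys.cls x)) := by
  have heq : (fun x : K => dist x (xs' (sys.cls x)))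
      = fun x => ∑ v : Fin N, (sys.Ki v).indicator (fun y => dist y (xs' v)) x := by
    funext x
    rw [Finset.sum_eq_single (sys.cls x)]
    · rw [Set.indicator_of_mem (sys.mem_cls x)]
    · intro v _ hv
      exact Set.indicator_of_notMem (fun hm => hv ((sys.cls_eq hm).symm)) _
    · intro h; exact absurd (Finset.mem_univ _) h
  rw [heq]
  exact Finset.measurable_sum _ fun v _ =>
    ((continuous_id.dist continuous_const).measurable).indicator (sys.Ki_measurable v)

lemma lintegral_Ddist_eq (xs : Fin N → K) (μ : MeasureTheory.Measure K) :
    ∫⁻ x, ENNReal.ofReal (dist x (xs (sys.cls x))) ∂μ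
      = ∑ v : Fin N, ∫⁻ x in sys.Ki v, ENNReal.ofReal (dist x (xs v)) ∂μ := by
  have hcover : (⋃ v, sys.Ki v) = Set.univ := by
    ext x
    simp only [Set.mem_iUnion, Set.mem_univ, iff_true]
    exact sys.Ki_cover x
  rw [← MeasureTheory.setLIntegral_univ, ← hcover,
    MeasureTheory.lintegral_iUnion sys.Ki_measurable
      (fun v v' hne => sys.Ki_disjoint v v' hne), tsum_fintype]
  refine Finset.sum_congr rfl fun v _ => ?_
  refine MeasureTheory.setLIntegral_congr_fun (sys.Ki_measurable v)
    (fun x hx => ?_)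
  rw [sys.cls_eq hx]

lemma integrable_Ddist (xs xs' : Fin N → K) (μ : MeasureTheory.Measure K)
    [MeasureTheory.IsProbabilityMeasure μ]
    (hfin : (∑ v : Fin N, ∫⁻ x in sys.Ki v, ENNReal.ofReal (dist x (xs v)) ∂μ) < ⊤) :
    MeasureTheory.Integrable (fun x => dist x (xs' (sys.cls x))) μ := by
  constructor
  · exact (sys.measurable_Ddist xs').aestronglyMeasurable
  · rw [MeasureTheory.hasFiniteIntegral_iff_norm]
    set R := ∑ v : Fin N, dist (xs v) (xs' v) with hR
    have hR0 : 0 ≤ R := Finset.sum_nonneg fun v _ => dist_nonneg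
    have hRv : ∀ v, dist (xs v) (xs' v) ≤ R := fun v =>
      Finset.single_le_sum (f := fun v => dist (xs v) (xs' v))
        (fun i _ => dist_nonneg) (Finset.mem_univ v)
    have hb : ∀ x : K, ENNReal.ofReal ‖dist x (xs' (sys.cls x))‖
        ≤ ENNReal.ofReal (dist x (xs (sys.cls x))) + ENNReal.ofReal R := by
      intro x
      rw [Real.norm_eq_abs, abs_of_nonneg dist_nonneg, ← ENNReal.ofReal_add dist_nonneg hR0]
      apply ENNReal.ofReal_le_ofReal
      calc dist x (xs' (sys.cls x))
          ≤ dist x (xs (sys.cls x)) + dist (xs (sys.cls x)) (xs' (sys.cls x)) := dist_triangle _ _ _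
        _ ≤ dist x (xs (sys.cls x)) + R := by linarith [hRv (sys.cls x)]
    calc ∫⁻ x, ENNReal.ofReal ‖dist x (xs' (sys.cls x))‖ ∂μ
        ≤ ∫⁻ x, (ENNReal.ofReal (dist x (xs (sys.cls x))) + ENNReal.ofReal R) ∂μ :=
          MeasureTheory.lintegral_mono hb
      _ = (∫⁻ x, ENNReal.ofReal (dist x (xs (sys.cls x))) ∂μ) + ENNReal.ofReal R * μ Set.univ := by
          rw [MeasureTheory.lintegral_add_right _ measurable_const,
            MeasureTheory.lintegral_const]
      _ < ⊤ := by
          rw [sys.lintegral_Ddist_eq xs μ]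
          refine ENNReal.add_lt_top.mpr ⟨hfin, ?_⟩
          exact ENNReal.mul_lt_top ENNReal.ofReal_lt_top (MeasureTheory.measure_lt_top μ _)

lemma pointwise_contract (ha0 : 0 < a) (hcontr : sys.ContractiveOnAvg a)
    (fs : List E) (d : ℕ) {v : Fin N} (x y : K) (hx : x ∈ sys.Ki v) (hy : y ∈ sys.Ki v) :
    ∑ u : Fin (d + 1) → E, wordProb sys.w sys.p (List.ofFn u ++ fs) x *
        dist (wordMap sys.w (List.ofFn u ++ fs) x) (wordMap sys.w (List.ofFn u ++ fs) y)
      ≤ a ^ (d + 1 + fs.length) * dist x y := by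
  classical
  have hlen : ∀ u : Fin (d + 1) → E, d + 1 + fs.length = (List.ofFn u ++ fs).length := by
    intro u; rw [List.length_append, List.length_ofFn]
  set Ftup : (Fin (d + 1 + fs.length) → E) → ℝ := fun w =>
    wordProb sys.w sys.p (List.ofFn w) x *
      dist (wordMap sys.w (List.ofFn w) x) (wordMap sys.w (List.ofFn w) y) with hFtup
  set vmap : (Fin (d + 1) → E) → (Fin (d + 1 + fs.length) → E) := fun u i =>
    (List.ofFn u ++ fs).get (Fin.cast (hlen u) i) with hvmap
  have hofn : ∀ u, List.ofFn (vmap u) = List.ofFn u ++ fs := fun u => ofFn_get_cast _ (hlen u)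
  have hterm : ∀ u : Fin (d + 1) → E,
      wordProb sys.w sys.p (List.ofFn u ++ fs) x *
        dist (wordMap sys.w (List.ofFn u ++ fs) x) (wordMap sys.w (List.ofFn u ++ fs) y)
      = Ftup (vmap u) := by
    intro u; rw [hFtup]; simp only [hofn]
  have hinj : ∀ u ∈ Finset.univ, ∀ u' ∈ Finset.univ, vmap u = vmap u' → u = u' := by
    intro u _ u' _ h
    have h2 : List.ofFn u ++ fs = List.ofFn u' ++ fs := by rw [← hofn, ← hofn, h]
    exact List.ofFn_injective (List.append_cancel_right h2)
  calc ∑ u : Fin (d + 1) → E, wordProb sys.w sys.p (List.ofFn u ++ fs) x *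
        dist (wordMap sys.w (List.ofFn u ++ fs) x) (wordMap sys.w (List.ofFn u ++ fs) y)
      = ∑ u : Fin (d + 1) → E, Ftup (vmap u) := Finset.sum_congr rfl fun u _ => hterm u
    _ = ∑ w ∈ Finset.univ.image vmap, Ftup w := (Finset.sum_image hinj).symm
    _ ≤ ∑ w : Fin (d + 1 + fs.length) → E, Ftup w := by
        refine Finset.sum_le_sum_of_subset_of_nonneg (Finset.subset_univ _) fun w _ _ => ?_
        exact mul_nonneg (sys.wordProb_nonneg _ _) dist_nonneg
    _ ≤ a ^ (d + 1 + fs.length) * dist x y := sys.contract_sum ha0 hcontr _ x y hx hy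

end MarkovSystem
end Chunk5b
-- chunk 5c
section Chunk5c

namespace MarkovSystem

variable {K : Type*} [MetricSpace K] [MeasurableSpace K] [BorelSpace K]
  {N : ℕ} {E : Type*} [Fintype E] [MeasurableSpace E] [MeasurableSingletonClass E]

variable (sys : MarkovSystem K N E)

lemma indicator_gk_eq (xs' : Fin N → K) (es fs : List E) (d : ℕ) (σ : ℤ → E) :
    Set.indicator (lCyl (1 - (fs.length : ℤ)) fs)
      (fun σ' => wordProb sys.w sys.p es (comps sys.w σ' (d + fs.length)
        (xs' (sys.edgeI (σ' (-((d + fs.length : ℕ) : ℤ))))))) σ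
    = ∑ u : Fin (d + 1) → E,
        Set.indicator (lCyl (-((d + fs.length : ℕ) : ℤ)) (List.ofFn u ++ fs))
          (fun _ => wordProb sys.w sys.p es
            (wordMap sys.w (List.ofFn u ++ fs) (xs' (sys.edgeI (u 0))))) σ := by
  classical
  set n := fs.length with hn
  set k := d + n with hk
  set u₀ : Fin (d + 1) → E := fun i => σ (-(k : ℤ) + (i : ℕ)) with hu₀
  have harith : (-(k : ℤ) + ((d + 1 : ℕ) : ℤ)) = 1 - (n : ℤ) := by
    rw [hk]; push_cast; ring
  rw [Finset.sum_eq_single u₀]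
  · by_cases hs : σ ∈ lCyl (1 - (n : ℤ)) fs
    · have hpre : σ ∈ lCyl (-(k : ℤ)) (List.ofFn u₀) := by
        intro j
        rw [List.get_ofFn]
        rfl
      have hsuf : σ ∈ lCyl (-(k : ℤ) + ((List.ofFn u₀).length : ℤ)) fs := by
        have h2 : (-(k : ℤ) + ((List.ofFn u₀).length : ℤ)) = 1 - (n : ℤ) := by
          rw [List.length_ofFn]; exact harith
        rw [h2]; exact hs
      have hmem : σ ∈ lCyl (-(k : ℤ)) (List.ofFn u₀ ++ fs) := by
        rw [lCyl_append]; exact ⟨hpre, hsuf⟩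
      rw [Set.indicator_of_mem hs, Set.indicator_of_mem hmem]
      rw [comps_eq]
      have hlist : (List.ofFn fun j : Fin (k + 1) => σ (-(k : ℤ) + (j : ℕ)))
          = List.ofFn u₀ ++ fs := by
        apply List.ext_getElem
        · rw [List.length_ofFn, List.length_append, List.length_ofFn]; omega
        · intro i h1 h2
          rw [List.getElem_ofFn]
          by_cases hi : i < d + 1
          · rw [List.getElem_append_left (by rw [List.length_ofFn]; exact hi)]
            rw [List.getElem_ofFn]
          · push_neg at hi
            rw [List.getElem_append_right (by rw [List.length_ofFn]; exact hi)]
            have hfs : i - (List.ofFn u₀).length < fs.length := by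
              rw [List.length_ofFn]
              rw [List.length_ofFn] at h1
              omega
            have := hs ⟨i - (List.ofFn u₀).length, hfs⟩
            rw [List.get_eq_getElem] at this
            rw [← this]
            congr 1
            simp only [List.length_ofFn, Fin.val_mk]
            push_cast
            omega
      rw [hlist]
      have h00 : σ (-(k : ℤ)) = u₀ 0 := by
        rw [hu₀]
        show σ (-(k:ℤ)) = σ (-(k : ℤ) + ((0 : ℕ) : ℤ))
        norm_num
      rw [h00]
    · have hmem' : σ ∉ lCyl (-(k : ℤ)) (List.ofFn u₀ ++ fs) := by
        intro hmem
        rw [lCyl_append] at hmem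
        apply hs
        have h2 : (-(k : ℤ) + ((List.ofFn u₀).length : ℤ)) = 1 - (n : ℤ) := by
          rw [List.length_ofFn]; exact harith
        rw [← h2]
        exact hmem.2
      rw [Set.indicator_of_notMem hs, Set.indicator_of_notMem hmem']
  · intro u _ hne
    apply Set.indicator_of_notMem
    intro hmem
    rw [lCyl_append] at hmem
    apply hne
    funext i
    have := hmem.1 ⟨(i : ℕ), by rw [List.length_ofFn]; exact i.isLt⟩
    rw [List.get_ofFn] at this
    have hcast : (Fin.cast (List.length_ofFn (f := u)) ⟨(i : ℕ), by rw [List.length_ofFn]; exact i.isLt⟩)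
        = i := by ext; rfl
    rw [hcast] at this
    exact this.symm
  · intro h
    exact absurd (Finset.mem_univ _) h

lemma measurable_gk_of {m' : MeasurableSpace (ℤ → E)}
    (hev : ∀ j : ℤ, j ≤ 0 → Measurable[m'] fun σ : ℤ → E => σ j)
    (xs' : Fin N → K) (es : List E) (k : ℕ) :
    Measurable[m'] fun σ : ℤ → E => wordProb sys.w sys.p es
      (comps sys.w σ k (xs' (sys.edgeI (σ (-(k : ℕ) : ℤ))))) := by
  haveI : MeasurableSingletonClass (Fin (k + 1) → E) := by
    constructor
    intro u
    have h : ({u} : Set (Fin (k + 1) → E)) = ⋂ j, (fun v : Fin (k+1) → E => v j) ⁻¹' {u j} := by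
      ext v
      simp [funext_iff]
    rw [h]
    exact MeasurableSet.iInter fun j => measurable_pi_apply j (measurableSet_singleton _)
  have hwin : Measurable[m'] fun σ : ℤ → E => (fun j : Fin (k + 1) => σ (-(k : ℤ) + (j : ℕ))) :=
    measurable_pi_lambda _ fun j => hev _ (by have := j.isLt; omega)
  have hφ : Measurable fun u : Fin (k + 1) → E => wordProb sys.w sys.p es
      (wordMap sys.w (List.ofFn u) (xs' (sys.edgeI (u 0)))) := measurable_of_countable _
  have heq : (fun σ : ℤ → E => wordProb sys.w sys.p es
        (comps sys.w σ k (xs' (sys.edgeI (σ (-(k : ℕ) : ℤ))))))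
      = (fun u : Fin (k + 1) → E => wordProb sys.w sys.p es
          (wordMap sys.w (List.ofFn u) (xs' (sys.edgeI (u 0)))))
        ∘ (fun σ : ℤ → E => (fun j : Fin (k + 1) => σ (-(k : ℤ) + (j : ℕ)))) := by
    funext σ
    show wordProb sys.w sys.p es (comps sys.w σ k (xs' (sys.edgeI (σ (-(k : ℕ) : ℤ))))) = _
    rw [comps_eq]
    simp only [Function.comp]
    congr 3
    norm_num
  rw [heq]
  exact hφ.comp hwin

end MarkovSystem
end Chunk5c
-- chunk 5d
section Chunk5d

namespace MarkovSystem

variable {K : Type*} [MetricSpace K] [MeasurableSpace K] [BorelSpace K]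
  {N : ℕ} {E : Type*} [Fintype E] [MeasurableSpace E] [MeasurableSingletonClass E]

variable (sys : MarkovSystem K N E)

lemma M_lCyl (μ : MeasureTheory.Measure K) (M : MeasureTheory.Measure (ℤ → E))
    (hM : IsMarkovMeasure sys μ M) (m : ℤ) (l : List E) :
    M (lCyl m l) = ENNReal.ofReal (∫ x, wordProb sys.w sys.p l x ∂μ) := hM.2 m l

lemma setIntegral_gk (μ : MeasureTheory.Measure K) (M : MeasureTheory.Measure (ℤ → E))
    (hM : IsMarkovMeasure sys μ M) (xs' : Fin N → K) (es fs : List E) (d : ℕ) :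
    ∫ σ in lCyl (1 - (fs.length : ℤ)) fs,
        wordProb sys.w sys.p es (comps sys.w σ (d + fs.length)
          (xs' (sys.edgeI (σ (-((d + fs.length : ℕ) : ℤ)))))) ∂M
    = ∑ u : Fin (d + 1) → E, (∫ x, wordProb sys.w sys.p (List.ofFn u ++ fs) x ∂μ) *
        wordProb sys.w sys.p es (wordMap sys.w (List.ofFn u ++ fs) (xs' (sys.edgeI (u 0)))) := by
  haveI := hM.1
  rw [← MeasureTheory.integral_indicator (measurableSet_lCyl _ _)]
  simp_rw [sys.indicator_gk_eq xs' es fs d]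
  rw [MeasureTheory.integral_finset_sum _ (fun u _ =>
    (MeasureTheory.integrable_const _).indicator (measurableSet_lCyl _ _))]
  refine Finset.sum_congr rfl fun u _ => ?_
  rw [MeasureTheory.integral_indicator_const _ (measurableSet_lCyl _ _)]
  rw [MeasureTheory.measureReal_def, sys.M_lCyl μ M hM]
  rw [ENNReal.toReal_ofReal (MeasureTheory.integral_nonneg fun x => sys.wordProb_nonneg _ x)]
  rw [smul_eq_mul]

lemma setIntegral_f (μ : MeasureTheory.Measure K) (M : MeasureTheory.Measure (ℤ → E))
    (hM : IsMarkovMeasure sys μ M) (es fs : List E) :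
    ∫ σ in lCyl (1 - (fs.length : ℤ)) fs,
        Set.indicator (lCyl 1 es) (fun _ => (1 : ℝ)) σ ∂M
    = ∫ x, wordProb sys.w sys.p (fs ++ es) x ∂μ := by
  haveI := hM.1
  rw [MeasureTheory.integral_indicator_const (1 : ℝ) (measurableSet_lCyl 1 es)]
  rw [MeasureTheory.measureReal_def, MeasureTheory.Measure.restrict_apply (measurableSet_lCyl 1 es)]
  have hset : lCyl (1 : ℤ) es ∩ lCyl (1 - (fs.length : ℤ)) fs
      = lCyl (1 - (fs.length : ℤ)) (fs ++ es) := by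
    rw [lCyl_append]
    have harith : 1 - (fs.length : ℤ) + (fs.length : ℤ) = 1 := by ring
    rw [harith, Set.inter_comm]
  rw [hset, sys.M_lCyl μ M hM]
  rw [ENNReal.toReal_ofReal (MeasureTheory.integral_nonneg fun x => sys.wordProb_nonneg _ x)]
  rw [smul_eq_mul, mul_one]

lemma integrable_wordProb_mul (μ : MeasureTheory.Measure K)
    [MeasureTheory.IsFiniteMeasure μ] (l : List E) (ψ : K → ℝ) (hψm : Measurable ψ) (B : ℝ)
    (hψb : ∀ y, |ψ y| ≤ B) :
    MeasureTheory.Integrable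
      (fun x => wordProb sys.w sys.p l x * ψ (wordMap sys.w l x)) μ :=
  integrable_of_bound μ _ B
    ((sys.measurable_wordProb l).mul (hψm.comp (sys.measurable_wordMap l)))
    (sys.wordBounded l ψ B hψb)

lemma sum_integral_wordProb_le_one (μ : MeasureTheory.Measure K)
    [MeasureTheory.IsProbabilityMeasure μ] (fs : List E) (d : ℕ) :
    ∑ u : Fin (d + 1) → E, ∫ x, wordProb sys.w sys.p (List.ofFn u ++ fs) x ∂μ ≤ 1 := by
  have hint : ∀ u : Fin (d + 1) → E,
      MeasureTheory.Integrable (fun x => wordProb sys.w sys.p (List.ofFn u ++ fs) x) μ :=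
    fun u => integrable_of_bound μ _ 1 (sys.measurable_wordProb _)
      (fun x => abs_le.mpr ⟨by linarith [sys.wordProb_nonneg (List.ofFn u ++ fs) x],
        sys.wordProb_le_one _ x⟩)
  rw [← MeasureTheory.integral_finset_sum _ fun u _ => hint u]
  have hpt : ∀ x : K, ∑ u : Fin (d + 1) → E, wordProb sys.w sys.p (List.ofFn u ++ fs) x ≤ 1 := by
    intro x
    calc ∑ u : Fin (d + 1) → E, wordProb sys.w sys.p (List.ofFn u ++ fs) x
        ≤ ∑ u : Fin (d + 1) → E, wordProb sys.w sys.p (List.ofFn u) x := by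
          refine Finset.sum_le_sum fun u _ => ?_
          rw [wordProb_append']
          calc wordProb sys.w sys.p (List.ofFn u) x *
                wordProb sys.w sys.p fs (wordMap sys.w (List.ofFn u) x)
              ≤ wordProb sys.w sys.p (List.ofFn u) x * 1 :=
                mul_le_mul_of_nonneg_left (sys.wordProb_le_one _ _) (sys.wordProb_nonneg _ _)
            _ = _ := mul_one _
      _ = 1 := sys.sum_wordProb_ofFn (d + 1) x
  calc ∫ x, ∑ u : Fin (d + 1) → E, wordProb sys.w sys.p (List.ofFn u ++ fs) x ∂μ
      ≤ ∫ _x, (1 : ℝ) ∂μ := by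
        refine MeasureTheory.integral_mono
          (MeasureTheory.integrable_finset_sum _ fun u _ => hint u)
          (MeasureTheory.integrable_const 1) hpt
    _ = 1 := by simp

end MarkovSystem
end Chunk5d
-- chunk 6a
section Chunk6a

namespace MarkovSystem

variable {K : Type*} [MetricSpace K] [MeasurableSpace K] [BorelSpace K]
  {N : ℕ} {E : Type*} [Fintype E] [MeasurableSpace E] [MeasurableSingletonClass E]

variable (sys : MarkovSystem K N E) {a δ : ℝ}

lemma measurable_dist_cls {f : K → K} (hf : Measurable f) (g : Fin N → K) :
    Measurable fun x : K => dist (f x) (g (sys.cls x)) := by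
  have heq : (fun x : K => dist (f x) (g (sys.cls x)))
      = fun x => ∑ v : Fin N, (sys.Ki v).indicator (fun y => dist (f y) (g v)) x := by
    funext x
    rw [Finset.sum_eq_single (sys.cls x)]
    · rw [Set.indicator_of_mem (sys.mem_cls x)]
    · intro v _ hv
      exact Set.indicator_of_notMem (fun hm => hv ((sys.cls_eq hm).symm)) _
    · intro h; exact absurd (Finset.mem_univ _) h
  rw [heq]
  refine Finset.measurable_sum _ fun v _ => Measurable.indicator ?_ (sys.Ki_measurable v)
  exact ((continuous_id.dist continuous_const).measurable).comp hf

lemma ae_tendsto_gk (ha0 : 0 < a) (hδpos : 0 < δ) (hcontr : sys.ContractiveOnAvg a)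
    (hδ : ∀ e, ∀ x ∈ sys.Ki (sys.edgeI e), δ ≤ sys.p e x)
    (hdini : ∀ e, DiniContinuous fun x : sys.Ki (sys.edgeI e) => sys.p e (x : K))
    (hopen : ∀ v, IsOpen (sys.Ki v))
    (M : MeasureTheory.Measure (ℤ → E)) (F : (ℤ → E) → K) (xs' : Fin N → K)
    (hconv : ∀ᵐ σ ∂M, Filter.Tendsto
      (fun m : ℕ => comps sys.w σ m (xs' (sys.edgeI (σ (-(m : ℤ))))))
      Filter.atTop (nhds (F σ)))
    (es : List E) (n : ℕ) :
    ∀ᵐ σ ∂M, Filter.Tendsto (fun d : ℕ => wordProb sys.w sys.p es (comps sys.w σ (d + n)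
        (xs' (sys.edgeI (σ (-((d + n : ℕ) : ℤ)))))))
      Filter.atTop (nhds (wordProb sys.w sys.p es (F σ))) := by
  filter_upwards [hconv] with σ hσ
  have hz : Filter.Tendsto (fun d : ℕ => comps sys.w σ (d + n)
      (xs' (sys.edgeI (σ (-((d + n : ℕ) : ℤ)))))) Filter.atTop (nhds (F σ)) :=
    hσ.comp (Filter.tendsto_add_atTop_nat n)
  set z : ℕ → K := fun d => comps sys.w σ (d + n)
    (xs' (sys.edgeI (σ (-((d + n : ℕ) : ℤ))))) with hzdef
  rw [Metric.tendsto_atTop]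
  intro ε hε
  obtain ⟨t, ht, H⟩ := sys.fiberUC ha0 hδpos hcontr hδ hdini es (half_pos hε)
  obtain ⟨r, hr, hball⟩ := Metric.isOpen_iff.mp (hopen (sys.cls (F σ))) (F σ) (sys.mem_cls (F σ))
  obtain ⟨Nd, hNd⟩ := (Metric.tendsto_atTop.mp hz) (min t r) (lt_min ht hr)
  refine ⟨Nd, fun d hd => ?_⟩
  have h1 := hNd d hd
  have hzin : z d ∈ sys.Ki (sys.cls (F σ)) := by
    apply hball
    rw [Metric.mem_ball]
    exact lt_of_lt_of_le h1 (min_le_right _ _)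
  have h2 : dist (z d) (F σ) ≤ t := le_of_lt (lt_of_lt_of_le h1 (min_le_left _ _))
  have h3 := H (sys.cls (F σ)) (z d) (F σ) hzin (sys.mem_cls _) h2
  rw [Real.dist_eq]
  exact lt_of_le_of_lt h3 (half_lt_self hε)

lemma pointwise_P (ha0 : 0 < a) (hcontr : sys.ContractiveOnAvg a)
    (xs' : Fin N → K) (hxs' : ∀ v, xs' v ∈ sys.Ki v)
    (es fs : List E) {ε t : ℝ} (hε : 0 < ε) (ht : 0 < t)
    (H : ∀ (v : Fin N) (x y : K), x ∈ sys.Ki v → y ∈ sys.Ki v → dist x y ≤ t →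
      |wordProb sys.w sys.p es x - wordProb sys.w sys.p es y| ≤ ε)
    (d : ℕ) (u : Fin (d + 1) → E) (x : K) :
    |wordProb sys.w sys.p (List.ofFn u ++ fs) x *
        wordProb sys.w sys.p es (wordMap sys.w (List.ofFn u ++ fs) x)
      - wordProb sys.w sys.p (List.ofFn u ++ fs) x *
        wordProb sys.w sys.p es (wordMap sys.w (List.ofFn u ++ fs) (xs' (sys.edgeI (u 0))))|
    ≤ ε * wordProb sys.w sys.p (List.ofFn u ++ fs) x
      + 2 / t * (wordProb sys.w sys.p (List.ofFn u ++ fs) x *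
          dist (wordMap sys.w (List.ofFn u ++ fs) x)
            (wordMap sys.w (List.ofFn u ++ fs) (xs' (sys.cls x)))) := by
  set l := List.ofFn u ++ fs with hl
  set W := wordProb sys.w sys.p l x with hW
  have hWnn : 0 ≤ W := sys.wordProb_nonneg l x
  by_cases hW0 : W = 0
  · rw [← mul_sub, abs_mul, hW0]
    simp only [zero_mul, mul_zero, abs_zero]
    positivity
  · -- x ∈ Ki (edgeI (u 0))
    have hxKi : x ∈ sys.Ki (sys.edgeI (u 0)) := by
      have hsplit : l = u 0 :: (List.ofFn (fun i : Fin d => u i.succ) ++ fs) := by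
        rw [hl, List.ofFn_succ, List.cons_append]
      have hp : sys.p (u 0) x ≠ 0 := by
        intro hp0
        apply hW0
        rw [hW, hsplit, wordProb_cons, hp0, zero_mul]
      exact sys.mem_of_p_ne_zero hp
    have hclseq : sys.cls x = sys.edgeI (u 0) := sys.cls_eq hxKi
    rw [← hclseq]
    set y := xs' (sys.cls x) with hy
    have hxmem : x ∈ sys.Ki (sys.cls x) := sys.mem_cls x
    have hymem : y ∈ sys.Ki (sys.cls x) := hxs' (sys.cls x)
    obtain ⟨v', hv'x, hv'y⟩ := sys.sameClass l hxmem hymem hW0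
    rw [← mul_sub, abs_mul, abs_of_nonneg hWnn]
    by_cases hdist : dist (wordMap sys.w l x) (wordMap sys.w l y) ≤ t
    · have hle := H v' _ _ hv'x hv'y hdist
      calc W * |wordProb sys.w sys.p es (wordMap sys.w l x)
            - wordProb sys.w sys.p es (wordMap sys.w l y)|
          ≤ W * ε := mul_le_mul_of_nonneg_left hle hWnn
        _ ≤ ε * W + 2 / t * (W * dist (wordMap sys.w l x) (wordMap sys.w l y)) := by
            have h2 : 0 ≤ 2 / t * (W * dist (wordMap sys.w l x) (wordMap sys.w l y)) := by
              positivity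
            linarith [mul_comm W ε]
    · push_neg at hdist
      have habs2 : |wordProb sys.w sys.p es (wordMap sys.w l x)
          - wordProb sys.w sys.p es (wordMap sys.w l y)| ≤ 2 := by
        have b1 := sys.wordProb_nonneg es (wordMap sys.w l x)
        have b2 := sys.wordProb_le_one es (wordMap sys.w l x)
        have b3 := sys.wordProb_nonneg es (wordMap sys.w l y)
        have b4 := sys.wordProb_le_one es (wordMap sys.w l y)
        rw [abs_le]; constructor <;> linarith
      have h2d : (2 : ℝ) ≤ 2 / t * dist (wordMap sys.w l x) (wordMap sys.w l y) := by
        rw [div_mul_eq_mul_div, le_div_iff₀ ht]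
        nlinarith
      calc W * |wordProb sys.w sys.p es (wordMap sys.w l x)
            - wordProb sys.w sys.p es (wordMap sys.w l y)|
          ≤ W * (2 / t * dist (wordMap sys.w l x) (wordMap sys.w l y)) :=
            mul_le_mul_of_nonneg_left (le_trans habs2 h2d) hWnn
        _ = 2 / t * (W * dist (wordMap sys.w l x) (wordMap sys.w l y)) := by ring
        _ ≤ ε * W + 2 / t * (W * dist (wordMap sys.w l x) (wordMap sys.w l y)) := by
            have : 0 ≤ ε * W := mul_nonneg hε.le hWnn
            linarith

end MarkovSystem
end Chunk6a
-- chunk 6b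
section Chunk6b

open MeasureTheory

namespace MarkovSystem

variable {K : Type*} [MetricSpace K] [MeasurableSpace K] [BorelSpace K]
  {N : ℕ} {E : Type*} [Fintype E] [MeasurableSpace E] [MeasurableSingletonClass E]

variable (sys : MarkovSystem K N E) {a : ℝ}

lemma bound_per_d (ha0 : 0 < a) (hcontr : sys.ContractiveOnAvg a)
    (μ : Measure K) (hμ : sys.IsInvariant μ)
    (xs xs' : Fin N → K) (hxs' : ∀ v, xs' v ∈ sys.Ki v)
    (hfin : (∑ v : Fin N, ∫⁻ x in sys.Ki v, ENNReal.ofReal (dist x (xs v)) ∂μ) < ⊤)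
    (es fs : List E) {ε t : ℝ} (hε : 0 < ε) (ht : 0 < t)
    (H : ∀ (v : Fin N) (x y : K), x ∈ sys.Ki v → y ∈ sys.Ki v → dist x y ≤ t →
      |wordProb sys.w sys.p es x - wordProb sys.w sys.p es y| ≤ ε)
    (d : ℕ) :
    |(∫ x, wordProb sys.w sys.p (fs ++ es) x ∂μ)
      - ∑ u : Fin (d + 1) → E, (∫ x, wordProb sys.w sys.p (List.ofFn u ++ fs) x ∂μ) *
          wordProb sys.w sys.p es (wordMap sys.w (List.ofFn u ++ fs) (xs' (sys.edgeI (u 0))))|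
    ≤ ε + 2 / t * (a ^ (d + 1 + fs.length) * ∫ x, dist x (xs' (sys.cls x)) ∂μ) := by
  haveI := hμ.1
  have hψm : Measurable (wordProb sys.w sys.p es) := sys.measurable_wordProb es
  have hψb : ∀ y : K, |wordProb sys.w sys.p es y| ≤ 1 := fun y =>
    abs_le.mpr ⟨by linarith [sys.wordProb_nonneg es y], sys.wordProb_le_one es y⟩
  set L := d + 1 + fs.length with hL
  set Dd : K → ℝ := fun x => dist x (xs' (sys.cls x)) with hDd
  have hDd_int : Integrable Dd μ := sys.integrable_Ddist xs xs' μ hfin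
  set Cd := ∫ x, Dd x ∂μ with hCd
  -- Step 1
  have hstep1 : ∫ x, wordProb sys.w sys.p (fs ++ es) x ∂μ
      = ∑ u : Fin (d + 1) → E, ∫ x, wordProb sys.w sys.p (List.ofFn u ++ fs) x *
          wordProb sys.w sys.p es (wordMap sys.w (List.ofFn u ++ fs) x) ∂μ := by
    rw [show (fun x => wordProb sys.w sys.p (fs ++ es) x)
        = fun x => wordProb sys.w sys.p fs x *
            wordProb sys.w sys.p es (wordMap sys.w fs x) from funext fun x => wordProb_append' _ _ _ _ _]
    exact (sys.sum_integral_wordProb_append μ hμ fs _ hψm 1 hψb (d + 1)).symm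
  -- integrabilities
  have hint_W : ∀ u : Fin (d + 1) → E,
      Integrable (fun x => wordProb sys.w sys.p (List.ofFn u ++ fs) x) μ := fun u =>
    integrable_of_bound μ _ 1 (sys.measurable_wordProb _)
      (fun x => abs_le.mpr ⟨by linarith [sys.wordProb_nonneg (List.ofFn u ++ fs) x],
        sys.wordProb_le_one _ x⟩)
  have hint_main : ∀ u : Fin (d + 1) → E,
      Integrable (fun x => wordProb sys.w sys.p (List.ofFn u ++ fs) x *
        wordProb sys.w sys.p es (wordMap sys.w (List.ofFn u ++ fs) x)) μ := fun u =>
    sys.integrable_wordProb_mul μ _ _ hψm 1 hψb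
  have hint_G : ∀ u : Fin (d + 1) → E,
      Integrable (fun x => wordProb sys.w sys.p (List.ofFn u ++ fs) x *
        wordProb sys.w sys.p es (wordMap sys.w (List.ofFn u ++ fs) (xs' (sys.edgeI (u 0))))) μ :=
    fun u => (hint_W u).mul_const _
  have hdist_meas : ∀ u : Fin (d + 1) → E, Measurable (fun x =>
      dist (wordMap sys.w (List.ofFn u ++ fs) x)
        (wordMap sys.w (List.ofFn u ++ fs) (xs' (sys.cls x)))) := fun u =>
    sys.measurable_dist_cls (sys.measurable_wordMap _)
      (fun v => wordMap sys.w (List.ofFn u ++ fs) (xs' v))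
  have hptQ : ∀ x : K, ∑ u : Fin (d + 1) → E,
      wordProb sys.w sys.p (List.ofFn u ++ fs) x *
        dist (wordMap sys.w (List.ofFn u ++ fs) x)
          (wordMap sys.w (List.ofFn u ++ fs) (xs' (sys.cls x)))
      ≤ a ^ L * Dd x := fun x =>
    sys.pointwise_contract ha0 hcontr fs d x (xs' (sys.cls x)) (sys.mem_cls x)
      (hxs' (sys.cls x))
  have hterm_le : ∀ (u : Fin (d + 1) → E) (x : K),
      wordProb sys.w sys.p (List.ofFn u ++ fs) x *
        dist (wordMap sys.w (List.ofFn u ++ fs) x)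
          (wordMap sys.w (List.ofFn u ++ fs) (xs' (sys.cls x)))
      ≤ a ^ L * Dd x := by
    intro u x
    refine le_trans ?_ (hptQ x)
    exact Finset.single_le_sum (f := fun u : Fin (d+1) → E =>
        wordProb sys.w sys.p (List.ofFn u ++ fs) x *
          dist (wordMap sys.w (List.ofFn u ++ fs) x)
            (wordMap sys.w (List.ofFn u ++ fs) (xs' (sys.cls x))))
      (fun i _ => mul_nonneg (sys.wordProb_nonneg _ _) dist_nonneg) (Finset.mem_univ u)
  have hWdist_int : ∀ u : Fin (d + 1) → E,
      Integrable (fun x => wordProb sys.w sys.p (List.ofFn u ++ fs) x *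
        dist (wordMap sys.w (List.ofFn u ++ fs) x)
          (wordMap sys.w (List.ofFn u ++ fs) (xs' (sys.cls x)))) μ := by
    intro u
    refine (hDd_int.const_mul (a ^ L)).mono'
      (((sys.measurable_wordProb _).mul (hdist_meas u)).aestronglyMeasurable)
      (ae_of_all _ fun x => ?_)
    rw [Real.norm_eq_abs, abs_of_nonneg (mul_nonneg (sys.wordProb_nonneg _ _) dist_nonneg)]
    exact hterm_le u x
  -- Step 2
  have hstep2 : ∀ u : Fin (d + 1) → E,
      (∫ x, wordProb sys.w sys.p (List.ofFn u ++ fs) x ∂μ) *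
          wordProb sys.w sys.p es (wordMap sys.w (List.ofFn u ++ fs) (xs' (sys.edgeI (u 0))))
      = ∫ x, wordProb sys.w sys.p (List.ofFn u ++ fs) x *
          wordProb sys.w sys.p es (wordMap sys.w (List.ofFn u ++ fs) (xs' (sys.edgeI (u 0)))) ∂μ :=
    fun u => (integral_mul_const _ _).symm
  -- Step 3 : the difference
  rw [hstep1]
  simp_rw [hstep2]
  rw [← Finset.sum_sub_distrib]
  have hdiff : ∀ u : Fin (d + 1) → E,
      (∫ x, wordProb sys.w sys.p (List.ofFn u ++ fs) x *
          wordProb sys.w sys.p es (wordMap sys.w (List.ofFn u ++ fs) x) ∂μ)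
        - ∫ x, wordProb sys.w sys.p (List.ofFn u ++ fs) x *
            wordProb sys.w sys.p es (wordMap sys.w (List.ofFn u ++ fs) (xs' (sys.edgeI (u 0)))) ∂μ
      = ∫ x, (wordProb sys.w sys.p (List.ofFn u ++ fs) x *
          wordProb sys.w sys.p es (wordMap sys.w (List.ofFn u ++ fs) x)
        - wordProb sys.w sys.p (List.ofFn u ++ fs) x *
            wordProb sys.w sys.p es (wordMap sys.w (List.ofFn u ++ fs) (xs' (sys.edgeI (u 0))))) ∂μ :=
    fun u => (integral_sub (hint_main u) (hint_G u)).symm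
  simp_rw [hdiff]
  calc |∑ u : Fin (d + 1) → E, ∫ x, (wordProb sys.w sys.p (List.ofFn u ++ fs) x *
          wordProb sys.w sys.p es (wordMap sys.w (List.ofFn u ++ fs) x)
        - wordProb sys.w sys.p (List.ofFn u ++ fs) x *
            wordProb sys.w sys.p es (wordMap sys.w (List.ofFn u ++ fs) (xs' (sys.edgeI (u 0))))) ∂μ|
      ≤ ∑ u : Fin (d + 1) → E, |∫ x, (wordProb sys.w sys.p (List.ofFn u ++ fs) x *
          wordProb sys.w sys.p es (wordMap sys.w (List.ofFn u ++ fs) x)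
        - wordProb sys.w sys.p (List.ofFn u ++ fs) x *
            wordProb sys.w sys.p es (wordMap sys.w (List.ofFn u ++ fs) (xs' (sys.edgeI (u 0))))) ∂μ| :=
        Finset.abs_sum_le_sum_abs _ _
    _ ≤ ∑ u : Fin (d + 1) → E, ∫ x,
          (ε * wordProb sys.w sys.p (List.ofFn u ++ fs) x
            + 2 / t * (wordProb sys.w sys.p (List.ofFn u ++ fs) x *
                dist (wordMap sys.w (List.ofFn u ++ fs) x)
                  (wordMap sys.w (List.ofFn u ++ fs) (xs' (sys.cls x))))) ∂μ := by
        refine Finset.sum_le_sum fun u _ => ?_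
        have h1 : |∫ x, (wordProb sys.w sys.p (List.ofFn u ++ fs) x *
              wordProb sys.w sys.p es (wordMap sys.w (List.ofFn u ++ fs) x)
            - wordProb sys.w sys.p (List.ofFn u ++ fs) x *
                wordProb sys.w sys.p es (wordMap sys.w (List.ofFn u ++ fs)
                  (xs' (sys.edgeI (u 0))))) ∂μ|
            ≤ ∫ x, |wordProb sys.w sys.p (List.ofFn u ++ fs) x *
              wordProb sys.w sys.p es (wordMap sys.w (List.ofFn u ++ fs) x)
            - wordProb sys.w sys.p (List.ofFn u ++ fs) x *
                wordProb sys.w sys.p es (wordMap sys.w (List.ofFn u ++ fs)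
                  (xs' (sys.edgeI (u 0))))| ∂μ := by
          simpa [Real.norm_eq_abs] using
            norm_integral_le_integral_norm (μ := μ) (f := fun x =>
              wordProb sys.w sys.p (List.ofFn u ++ fs) x *
                wordProb sys.w sys.p es (wordMap sys.w (List.ofFn u ++ fs) x)
              - wordProb sys.w sys.p (List.ofFn u ++ fs) x *
                  wordProb sys.w sys.p es (wordMap sys.w (List.ofFn u ++ fs)
                    (xs' (sys.edgeI (u 0)))))
        refine le_trans h1 ?_
        refine integral_mono ((hint_main u).sub (hint_G u)).abs
          (((hint_W u).const_mul ε).add ((hWdist_int u).const_mul (2 / t))) ?_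
        intro x
        exact sys.pointwise_P ha0 hcontr xs' hxs' es fs hε ht H d u x
    _ = ε * (∑ u : Fin (d + 1) → E, ∫ x, wordProb sys.w sys.p (List.ofFn u ++ fs) x ∂μ)
        + 2 / t * ∑ u : Fin (d + 1) → E, ∫ x,
            wordProb sys.w sys.p (List.ofFn u ++ fs) x *
              dist (wordMap sys.w (List.ofFn u ++ fs) x)
                (wordMap sys.w (List.ofFn u ++ fs) (xs' (sys.cls x))) ∂μ := by
        rw [Finset.mul_sum, Finset.mul_sum, ← Finset.sum_add_distrib]
        refine Finset.sum_congr rfl fun u _ => ?_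
        rw [integral_add ((hint_W u).const_mul ε) ((hWdist_int u).const_mul (2 / t)),
          integral_const_mul, integral_const_mul]
    _ ≤ ε * 1 + 2 / t * (a ^ L * Cd) := by
        have hS1 := sys.sum_integral_wordProb_le_one μ fs d
        have hS2 : ∑ u : Fin (d + 1) → E, ∫ x,
            wordProb sys.w sys.p (List.ofFn u ++ fs) x *
              dist (wordMap sys.w (List.ofFn u ++ fs) x)
                (wordMap sys.w (List.ofFn u ++ fs) (xs' (sys.cls x))) ∂μ
            ≤ a ^ L * Cd := by
          rw [← integral_finset_sum _ fun u _ => hWdist_int u]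
          calc ∫ x, ∑ u : Fin (d + 1) → E,
                wordProb sys.w sys.p (List.ofFn u ++ fs) x *
                  dist (wordMap sys.w (List.ofFn u ++ fs) x)
                    (wordMap sys.w (List.ofFn u ++ fs) (xs' (sys.cls x))) ∂μ
              ≤ ∫ x, a ^ L * Dd x ∂μ :=
                integral_mono (integrable_finset_sum _ fun u _ => hWdist_int u)
                  (hDd_int.const_mul _) hptQ
            _ = a ^ L * Cd := integral_const_mul _ _
        have h2t : (0:ℝ) ≤ 2 / t := by positivity
        have := mul_le_mul_of_nonneg_left hS2 h2t
        have := mul_le_mul_of_nonneg_left hS1 hε.le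
        linarith
    _ = ε + 2 / t * (a ^ L * Cd) := by ring

end MarkovSystem
end Chunk6b
-- chunk 6c
section Chunk6c

open MeasureTheory

namespace MarkovSystem

variable {K : Type*} [MetricSpace K] [MeasurableSpace K] [BorelSpace K]
  {N : ℕ} {E : Type*} [Fintype E] [MeasurableSpace E] [MeasurableSingletonClass E]

variable (sys : MarkovSystem K N E) {a δ : ℝ}

lemma basic_case (ha0 : 0 < a) (ha1 : a < 1) (hcontr : sys.ContractiveOnAvg a)
    (hopen : ∀ v, IsOpen (sys.Ki v)) (hδpos : 0 < δ)
    (hδ : ∀ e, ∀ x ∈ sys.Ki (sys.edgeI e), δ ≤ sys.p e x)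
    (hdini : ∀ e, DiniContinuous fun x : sys.Ki (sys.edgeI e) => sys.p e (x : K))
    (μ : Measure K) (hμ : sys.IsInvariant μ)
    (M : Measure (ℤ → E)) (hM : IsMarkovMeasure sys μ M)
    (F : (ℤ → E) → K) (xs' : Fin N → K) (hxs' : ∀ v, xs' v ∈ sys.Ki v)
    (hconv : ∀ᵐ σ ∂M, Filter.Tendsto
      (fun m : ℕ => comps sys.w σ m (xs' (sys.edgeI (σ (-(m : ℤ))))))
      Filter.atTop (nhds (F σ)))
    (xs : Fin N → K)
    (hfin : (∑ v : Fin N, ∫⁻ x in sys.Ki v, ENNReal.ofReal (dist x (xs v)) ∂μ) < ⊤)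
    (es fs : List E) :
    ∫ σ in lCyl (1 - (fs.length : ℤ)) fs, wordProb sys.w sys.p es (F σ) ∂M
    = ∫ σ in lCyl (1 - (fs.length : ℤ)) fs,
        Set.indicator (lCyl 1 es) (fun _ => (1 : ℝ)) σ ∂M := by
  haveI := hμ.1
  haveI := hM.1
  set n := fs.length with hn
  set s := lCyl (1 - (n : ℤ)) fs with hs
  set X := ∫ σ in s, wordProb sys.w sys.p es (F σ) ∂M with hX
  set A := ∫ σ in s, Set.indicator (lCyl 1 es) (fun _ => (1 : ℝ)) σ ∂M with hA
  set Cd := ∫ x, dist x (xs' (sys.cls x)) ∂μ with hCd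
  have hCd0 : 0 ≤ Cd := integral_nonneg fun x => dist_nonneg
  have hAeq : A = ∫ x, wordProb sys.w sys.p (fs ++ es) x ∂μ :=
    sys.setIntegral_f μ M hM es fs
  have hBd : ∀ d : ℕ, ∫ σ in s,
      wordProb sys.w sys.p es (comps sys.w σ (d + n)
        (xs' (sys.edgeI (σ (-((d + n : ℕ) : ℤ)))))) ∂M
      = ∑ u : Fin (d + 1) → E, (∫ x, wordProb sys.w sys.p (List.ofFn u ++ fs) x ∂μ) *
          wordProb sys.w sys.p es (wordMap sys.w (List.ofFn u ++ fs)
            (xs' (sys.edgeI (u 0)))) :=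
    fun d => sys.setIntegral_gk μ M hM xs' es fs d
  have hconv2 := sys.ae_tendsto_gk ha0 hδpos hcontr hδ hdini hopen M F xs' hconv es n
  have hlim : Filter.Tendsto (fun d : ℕ => ∫ σ in s,
      wordProb sys.w sys.p es (comps sys.w σ (d + n)
        (xs' (sys.edgeI (σ (-((d + n : ℕ) : ℤ)))))) ∂M) Filter.atTop (nhds X) := by
    refine tendsto_integral_of_dominated_convergence (fun _ => (1 : ℝ)) ?_ ?_ ?_ ?_
    · intro d
      exact ((sys.measurable_gk_of (fun j _ => measurable_pi_apply j) xs' es (d + n))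
        ).aestronglyMeasurable
    · exact integrable_const 1
    · intro d
      refine ae_of_all _ fun σ => ?_
      have hh : |wordProb sys.w sys.p es (comps sys.w σ (d + n)
          (xs' (sys.edgeI (σ (-((d + n : ℕ) : ℤ))))))| ≤ (1 : ℝ) :=
        abs_le.mpr ⟨by linarith [sys.wordProb_nonneg es (comps sys.w σ (d + n)
            (xs' (sys.edgeI (σ (-((d + n : ℕ) : ℤ))))))],
          sys.wordProb_le_one es _⟩
      simpa [Real.norm_eq_abs] using hh
    · exact ae_restrict_of_ae hconv2
  have key : ∀ ε : ℝ, 0 < ε → |X - A| ≤ ε := by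
    intro ε hε
    obtain ⟨t, ht, H⟩ := sys.fiberUC ha0 hδpos hcontr hδ hdini es (half_pos hε)
    have hb : ∀ d : ℕ, |A - ∫ σ in s,
        wordProb sys.w sys.p es (comps sys.w σ (d + n)
          (xs' (sys.edgeI (σ (-((d + n : ℕ) : ℤ)))))) ∂M|
        ≤ ε / 2 + 2 / t * (a ^ (d + 1 + n) * Cd) := by
      intro d
      rw [hAeq, hBd d]
      exact sys.bound_per_d ha0 hcontr μ hμ xs xs' hxs' hfin es fs (half_pos hε) ht H d
    have hXd : ∀ d : ℕ, |X - A| ≤ |X - ∫ σ in s,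
        wordProb sys.w sys.p es (comps sys.w σ (d + n)
          (xs' (sys.edgeI (σ (-((d + n : ℕ) : ℤ)))))) ∂M|
        + (ε / 2 + 2 / t * (a ^ (d + 1 + n) * Cd)) := by
      intro d
      have htri := abs_sub_le X (∫ σ in s,
        wordProb sys.w sys.p es (comps sys.w σ (d + n)
          (xs' (sys.edgeI (σ (-((d + n : ℕ) : ℤ)))))) ∂M) A
      have hcomm : |(∫ σ in s, wordProb sys.w sys.p es (comps sys.w σ (d + n)
          (xs' (sys.edgeI (σ (-((d + n : ℕ) : ℤ)))))) ∂M) - A|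
          = |A - ∫ σ in s, wordProb sys.w sys.p es (comps sys.w σ (d + n)
            (xs' (sys.edgeI (σ (-((d + n : ℕ) : ℤ)))))) ∂M| := abs_sub_comm _ _
      calc |X - A| ≤ _ := htri
        _ ≤ _ := by rw [hcomm]; exact add_le_add_right (hb d) _
    have hpow : Filter.Tendsto (fun d : ℕ => a ^ (d + 1 + n)) Filter.atTop (nhds 0) := by
      have h1 : Filter.Tendsto (fun m : ℕ => a ^ m) Filter.atTop (nhds 0) :=
        tendsto_pow_atTop_nhds_zero_of_lt_one ha0.le ha1
      have h2 := h1.comp (Filter.tendsto_add_atTop_nat (1 + n))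
      have heq : (fun d : ℕ => a ^ (d + 1 + n)) = (fun m : ℕ => a ^ m) ∘ fun d => d + (1 + n) := by
        funext d
        simp [Function.comp, add_assoc]
      rw [heq]
      exact h2
    have htend : Filter.Tendsto (fun d : ℕ => |X - ∫ σ in s,
        wordProb sys.w sys.p es (comps sys.w σ (d + n)
          (xs' (sys.edgeI (σ (-((d + n : ℕ) : ℤ)))))) ∂M|
        + (ε / 2 + 2 / t * (a ^ (d + 1 + n) * Cd))) Filter.atTop
        (nhds (|X - X| + (ε / 2 + 2 / t * (0 * Cd)))) := by
      refine Filter.Tendsto.add ?_ ?_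
      · exact (Filter.Tendsto.sub tendsto_const_nhds hlim).abs
      · exact Filter.Tendsto.add tendsto_const_nhds
          (Filter.Tendsto.const_mul _ (hpow.mul_const Cd))
    have hfinal : |X - A| ≤ |X - X| + (ε / 2 + 2 / t * (0 * Cd)) :=
      ge_of_tendsto htend (Filter.Eventually.of_forall hXd)
    rw [sub_self, abs_zero, zero_mul, mul_zero, zero_add, add_zero] at hfinal
    linarith
  by_contra hne
  have h0 : 0 < |X - A| := abs_pos.mpr (sub_ne_zero.mpr hne)
  have := key (|X - A| / 2) (half_pos h0)
  linarith

end MarkovSystem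
end Chunk6c

/-- Main lemma: for every finite word `(e₁, …, eₙ)`, the conditional expectation of
the indicator of the cylinder `{τ : τ₁ = e₁, …, τₙ = eₙ}` given the past coordinates
equals `σ ↦ p_{e₁}(F σ) p_{e₂}(w_{e₁} F σ) ⋯ p_{eₙ}(w_{e_{n-1}} ∘ ⋯ ∘ w_{e₁} F σ)`
`M`-almost everywhere. -/
theorem condexp_cylinder_eq_wordProb_coding
    {K : Type*} [MetricSpace K] [MeasurableSpace K] [BorelSpace K]
    {N : ℕ} {E : Type*} [Fintype E] [MeasurableSpace E] [MeasurableSingletonClass E]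
    (sys : MarkovSystem K N E) (a : ℝ) (ha0 : 0 < a) (ha1 : a < 1)
    (hcontr : sys.ContractiveOnAvg a)
    (hrelcpt : ∀ s : Set K, Bornology.IsBounded s → IsCompact (closure s))
    (hopen : ∀ v, IsOpen (sys.Ki v))
    (δ : ℝ) (hδpos : 0 < δ)
    (hδ : ∀ e, ∀ x ∈ sys.Ki (sys.edgeI e), δ ≤ sys.p e x)
    (hdini : ∀ e, DiniContinuous fun x : sys.Ki (sys.edgeI e) => sys.p e (x : K))
    (hsurj : Function.Surjective sys.edgeI)
    (μ : Measure K) (hμ : sys.IsInvariant μ)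
    (M : Measure (ℤ → E)) (hM : IsMarkovMeasure sys μ M)
    (F : (ℤ → E) → K) (hF : IsCodingMap sys M F)
    (xs : Fin N → K) (hxs : ∀ v, xs v ∈ sys.Ki v)
    (hfin : (∑ v : Fin N, ∫⁻ x in sys.Ki v, ENNReal.ofReal (dist x (xs v)) ∂μ) < ⊤)
    (es : List E) :
    M[Set.indicator {σ : ℤ → E | ∀ j : Fin es.length, σ (1 + (j : ℕ)) = es.get j}
        (fun _ => (1 : ℝ)) | pastAlgebra E]
      =ᵐ[M] fun σ => wordProb sys.w sys.p es (F σ) := by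
    classical
  obtain ⟨hFmeas, xs', hxs'mem, hconv⟩ := hF
  haveI : MeasureTheory.IsProbabilityMeasure μ := hμ.1
  haveI : MeasureTheory.IsProbabilityMeasure M := hM.1
  have hm : pastAlgebra E ≤ (inferInstance : MeasurableSpace (ℤ → E)) := pastAlgebra_le
  haveI : MeasureTheory.SigmaFinite (M.trim hm) := by
    haveI : MeasureTheory.IsFiniteMeasure (M.trim hm) := MeasureTheory.isFiniteMeasure_trim hm
    infer_instance
  set g : (ℤ → E) → ℝ := fun σ => wordProb sys.w sys.p es (F σ) with hg
  have hgmeas : Measurable g := (sys.measurable_wordProb es).comp hFmeas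
  have hgbd : ∀ σ, |g σ| ≤ 1 := fun σ =>
    abs_le.mpr ⟨by linarith [sys.wordProb_nonneg es (F σ)], sys.wordProb_le_one es (F σ)⟩
  have hg_int : MeasureTheory.Integrable g M := integrable_of_bound M g 1 hgmeas hgbd
  set f : (ℤ → E) → ℝ := Set.indicator (lCyl 1 es) (fun _ => (1 : ℝ)) with hf
  have hf_int : MeasureTheory.Integrable f M :=
    (MeasureTheory.integrable_const 1).indicator (measurableSet_lCyl 1 es)
  have huniv : ∫ σ, g σ ∂M = ∫ σ, f σ ∂M := by
    have hbc := sys.basic_case ha0 ha1 hcontr hopen hδpos hδ hdini μ hμ M hM F xs' hxs'mem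
      hconv xs hfin es ([] : List E)
    have hset : lCyl (1 - ((([] : List E)).length : ℤ)) ([] : List E) = Set.univ := by
      ext σ
      constructor
      · intro _; trivial
      · intro _ j; exact j.elim0
    rw [hset] at hbc
    simpa [MeasureTheory.Measure.restrict_univ] using hbc
  have hind : ∀ ⦃s : Set (ℤ → E)⦄, MeasurableSet[pastAlgebra E] s →
      ∫ σ in s, g σ ∂M = ∫ σ in s, f σ ∂M := by
    refine @MeasurableSpace.induction_on_inter (ℤ → E) (pastAlgebra E)
      (fun s _ => ∫ σ in s, g σ ∂M = ∫ σ in s, f σ ∂M) (pastCylinders E)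
      pastAlgebra_eq_generateFrom isPiSystem_pastCylinders ?_ ?_ ?_ ?_
    · simp
    · rintro u ⟨l, rfl⟩
      exact sys.basic_case ha0 ha1 hcontr hopen hδpos hδ hdini μ hμ M hM F xs' hxs'mem
        hconv xs hfin es l
    · intro u hu hCu
      have hu' : MeasurableSet u := hm u hu
      have h1 := MeasureTheory.integral_add_compl hu' hg_int
      have h2 := MeasureTheory.integral_add_compl hu' hf_int
      linarith
    · intro fseq hdisj hmeas hC
      have hmeas' : ∀ i, MeasurableSet (fseq i) := fun i => hm _ (hmeas i)
      rw [MeasureTheory.integral_iUnion hmeas' hdisj hg_int.integrableOn,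
        MeasureTheory.integral_iUnion hmeas' hdisj hf_int.integrableOn]
      exact tsum_congr hC
  have hgm : AEStronglyMeasurable[pastAlgebra E] g M := by
    set Gd : ℕ → (ℤ → E) → ℝ := fun d σ => wordProb sys.w sys.p es
      (comps sys.w σ (d + 0) (xs' (sys.edgeI (σ (-((d + 0 : ℕ) : ℤ)))))) with hGd
    have hGdm : ∀ d, Measurable[pastAlgebra E] (Gd d) := fun d =>
      sys.measurable_gk_of (fun j hj => measurable_eval_past hj) xs' es (d + 0)
    have htend : ∀ᵐ σ ∂M, Filter.Tendsto (fun d => Gd d σ) Filter.atTop (nhds (g σ)) :=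
      sys.ae_tendsto_gk ha0 hδpos hcontr hδ hdini hopen M F xs' hconv es 0
    have hSmeas : MeasurableSet[pastAlgebra E]
        {σ : ℤ → E | ∃ c : ℝ, Filter.Tendsto (fun d => Gd d σ) Filter.atTop (nhds c)} :=
      @MeasureTheory.measurableSet_exists_tendsto ℕ ℝ (ℤ → E) (pastAlgebra E) _ _ _ _ _ _
        Filter.atTop _ Gd hGdm
    have htrim : ∀ᵐ σ ∂(M.trim hm), ∃ c : ℝ,
        Filter.Tendsto (fun d => Gd d σ) Filter.atTop (nhds c) := by
      rw [MeasureTheory.ae_iff]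
      have hcompl : MeasurableSet[pastAlgebra E]
          {σ : ℤ → E | ¬ ∃ c : ℝ, Filter.Tendsto (fun d => Gd d σ) Filter.atTop (nhds c)} := by
        have : {σ : ℤ → E | ¬ ∃ c : ℝ, Filter.Tendsto (fun d => Gd d σ) Filter.atTop (nhds c)}
            = {σ : ℤ → E | ∃ c : ℝ, Filter.Tendsto (fun d => Gd d σ) Filter.atTop (nhds c)}ᶜ :=
          rfl
        rw [this]
        exact hSmeas.compl
      rw [MeasureTheory.trim_measurableSet_eq hm hcompl]
      have : ∀ᵐ σ ∂M, ∃ c : ℝ, Filter.Tendsto (fun d => Gd d σ) Filter.atTop (nhds c) :=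
        htend.mono fun σ h => ⟨g σ, h⟩
      exact MeasureTheory.ae_iff.mp this
    obtain ⟨glim, hglim_meas, hglim_tend⟩ :=
      @measurable_limit_of_tendsto_metrizable_ae (ℤ → E) ℝ (pastAlgebra E) _ _ _ _ ℕ _
        (M.trim hm) Gd Filter.atTop _ (fun d => (hGdm d).aemeasurable) htrim
    have hglim_ae : ∀ᵐ σ ∂M, Filter.Tendsto (fun d => Gd d σ) Filter.atTop (nhds (glim σ)) :=
      MeasureTheory.ae_of_ae_trim hm hglim_tend
    have hae : g =ᵐ[M] glim := by
      filter_upwards [htend, hglim_ae] with σ h1 h2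
      exact tendsto_nhds_unique h1 h2
    exact ⟨glim, hglim_meas.stronglyMeasurable, hae⟩
  exact (MeasureTheory.ae_eq_condExp_of_forall_setIntegral_eq hm hf_int
    (fun s _ _ => hg_int.integrableOn) (fun s hs _ => hind hs) hgm).symm
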